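/- Theorem 2 (asymptotic stability of MPC with charging constraints): Suppose V is nonempty, α_d·tmax ≤ 1, and t_hor ≥ 2·tmax + 2·⌈(α_d/α_c)·tmax⌉ (the integer form of the paper's bound t_hor ≥ 2(1 + α_d/α_c)·max t(i,j)). There exists ρ̄ > 0 (depending only on N, V, t, α_c, α_d, and t_hor) such that for all weights 0 ≤ ρ₁, ρ₂, ρ_c < ρ̄ and every MPC trajectory of the undisturbed augmented system starting from any feasible augmented state, there exists a time T with d(i,j)(τ) = 0 for all i, j ∈ N and all τ ≥ T; i.e., the model predictive controller with charging constraints drives the number of waiting customers to zero. -/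

import Mathlib

/-! ## AMoD model (Zhang, Rossi, Pavone) -/

/-- A state of the AMoD system: waiting customers `d`, travel indicators `p`,
waiting-vehicle indicators `u`. -/
structure AMoDState (N V : Type) where
  d : N → N → ℤ
  p : V → N → ℕ → ℤ
  u : V → N → ℤ

/-- A control of the AMoD system: customer-carrying trips `v`, rebalancing trips `w`. -/
structure AMoDControl (N V : Type) where
  v : V → N → N → ℤ
  w : V → N → N → ℤ

variable {N V : Type} [Fintype N] [DecidableEq N] [Fintype V]

/-- `Tmax i = (max_{j ≠ i} t j i) - 1`. -/
def Tmax (t : N → N → ℕ) (i : N) : ℕ :=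
  ((Finset.univ : Finset N).erase i).sup (fun j => t j i) - 1

/-- `tmax = max_{i ≠ j} t i j`. -/
def tmax (t : N → N → ℕ) : ℕ :=
  ((Finset.univ : Finset N).offDiag).sup (fun p => t p.1 p.2)

/-- `Σ_{i ∈ N} Σ_{T = 0}^{Tmax i} p k i T`. -/
def pSum (t : N → N → ℕ) (x : AMoDState N V) (k : V) : ℤ :=
  ∑ i : N, ∑ T ∈ Finset.range (Tmax t i + 1), x.p k i T

/-- Validity of a state: `d` nonnegative and zero on the diagonal,
`p` and `u` binary (and `p` vanishing out of range). -/
structure IsState (t : N → N → ℕ) (x : AMoDState N V) : Prop where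
  d_nonneg : ∀ i j, 0 ≤ x.d i j
  d_diag : ∀ i, x.d i i = 0
  p_bin : ∀ k i T, T ≤ Tmax t i → x.p k i T = 0 ∨ x.p k i T = 1
  p_oob : ∀ k i T, Tmax t i < T → x.p k i T = 0
  u_bin : ∀ k i, x.u k i = 0 ∨ x.u k i = 1

/-- Feasibility of a state: validity, constraint (P), and constraint (UP). -/
structure FeasState (t : N → N → ℕ) (x : AMoDState N V) : Prop where
  isState : IsState t x
  constrP : ∀ k, pSum t x k ≤ 1
  constrUP : ∀ k, (∑ i : N, x.u k i) + pSum t x k = 1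

/-- Validity of a control: binary values, zero diagonal. -/
structure IsControl (uc : AMoDControl N V) : Prop where
  v_bin : ∀ k i j, uc.v k i j = 0 ∨ uc.v k i j = 1
  w_bin : ∀ k i j, uc.w k i j = 0 ∨ uc.w k i j = 1
  v_diag : ∀ k i, uc.v k i i = 0
  w_diag : ∀ k i, uc.w k i i = 0

/-- Arrivals: nonnegative integers, zero on the diagonal. -/
def IsArrivals (c : N → N → ℤ) : Prop :=
  (∀ i j, 0 ≤ c i j) ∧ (∀ i, c i i = 0)

/-- Feasibility of a control at `(x, c)`: validity together with
constraints (A) and (B). -/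
structure FeasControl (t : N → N → ℕ) (x : AMoDState N V) (c : N → N → ℤ)
    (uc : AMoDControl N V) : Prop where
  isControl : IsControl uc
  constrA : ∀ k i, (∑ j : N, (uc.v k i j + uc.w k i j)) ≤ x.u k i + x.p k i 0
  constrB : ∀ i j, (∑ k : V, uc.v k i j) ≤ x.d i j + c i j

/-- The successor state `x⁺` of `x` under control `(v, w)` with arrivals `c`. -/
def succState (t : N → N → ℕ) (x : AMoDState N V) (c : N → N → ℤ)
    (uc : AMoDControl N V) : AMoDState N V where
  d := fun i j => x.d i j + c i j - ∑ k : V, uc.v k i j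
  p := fun k i T =>
    if T < Tmax t i then
      x.p k i (T + 1) +
        ∑ j ∈ Finset.univ.filter (fun j => t j i = T + 1), (uc.v k j i + uc.w k j i)
    else if T = Tmax t i then
      ∑ j ∈ Finset.univ.filter (fun j => t j i = Tmax t i + 1), (uc.v k j i + uc.w k j i)
    else 0
  u := fun k i => x.u k i + x.p k i 0 - ∑ j : N, (uc.v k i j + uc.w k i j)

/-- A feasible trajectory of the undisturbed system (`c ≡ 0`) from `x` over `n` steps. -/
def FeasTraj (t : N → N → ℕ) (x : AMoDState N V) (n : ℕ)
    (xs : ℕ → AMoDState N V) (cs : ℕ → AMoDControl N V) : Prop :=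
  xs 0 = x ∧ ∀ τ < n, FeasControl t (xs τ) (fun _ _ => 0) (cs τ) ∧
    xs (τ + 1) = succState t (xs τ) (fun _ _ => 0) (cs τ)

/-- The primary cost: total number of waiting customers. -/
def Jx (x : AMoDState N V) : ℤ := ∑ i : N, ∑ j : N, x.d i j

/-- The secondary cost: total rebalancing travel time. -/
def Ju (t : N → N → ℕ) (uc : AMoDControl N V) : ℤ :=
  ∑ k : V, ∑ i : N, ∑ j : N, (t i j : ℤ) * uc.w k i j

/-- The MPC cost of a plan over the horizon `thor`. -/
def planCost (t : N → N → ℕ) (ρ1 : ℝ) (thor : ℕ)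
    (xs : ℕ → AMoDState N V) (cs : ℕ → AMoDControl N V) : ℝ :=
  ∑ τ ∈ Finset.range thor, ((Jx (xs (τ + 1)) : ℝ) + ρ1 * (Ju t (cs τ) : ℝ))

/-- An MPC-optimal plan at a feasible state `x`. -/
def MPCOptimal (t : N → N → ℕ) (ρ1 : ℝ) (thor : ℕ) (x : AMoDState N V)
    (xs : ℕ → AMoDState N V) (cs : ℕ → AMoDControl N V) : Prop :=
  FeasTraj t x thor xs cs ∧
    ∀ ys ds, FeasTraj t x thor ys ds →
      planCost t ρ1 thor xs cs ≤ planCost t ρ1 thor ys ds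

/-- An (infinite) MPC trajectory of the undisturbed system: a feasible trajectory in
which every applied control is the first control of some MPC-optimal plan. -/
def MPCTraj (t : N → N → ℕ) (ρ1 : ℝ) (thor : ℕ)
    (xs : ℕ → AMoDState N V) (cs : ℕ → AMoDControl N V) : Prop :=
  (∀ τ, FeasControl t (xs τ) (fun _ _ => 0) (cs τ) ∧
      xs (τ + 1) = succState t (xs τ) (fun _ _ => 0) (cs τ)) ∧
  (∀ τ, ∃ ys ds, MPCOptimal t ρ1 thor (xs τ) ys ds ∧ ds 0 = cs τ)

/-! ## Charging model -/

/-- An augmented state: a state together with the state of charge of each vehicle. -/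
structure AugState (N V : Type) where
  x : AMoDState N V
  q : V → ℝ

variable {N V : Type} [Fintype N] [DecidableEq N] [Fintype V]

/-- Feasibility of an augmented state. -/
structure FeasAugState (t : N → N → ℕ) (αd : ℝ) (s : AugState N V) : Prop where
  feasState : FeasState t s.x
  q_nonneg : ∀ k, 0 ≤ s.q k
  q_le_one : ∀ k, s.q k ≤ 1
  q_range : ∀ k i T, s.x.p k i T = 1 → αd * (T : ℝ) ≤ s.q k

/-- The augmented successor of `(x, q)` under `(v, w)` with arrivals `c`. -/
def augSucc (t : N → N → ℕ) (αc αd : ℝ) (s : AugState N V) (c : N → N → ℤ)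
    (uc : AMoDControl N V) : AugState N V :=
  let x' := succState t s.x c uc
  { x := x'
    q := fun k =>
      min (s.q k + αc * ∑ i : N, ((x'.u k i : ℤ) : ℝ)) 1 -
        αd * ∑ i : N, ∑ T ∈ Finset.range (Tmax t i + 1), ((x'.p k i T : ℤ) : ℝ) }

/-- Feasibility of a control at an augmented state: feasibility at `(x, c)` plus the
charge constraints for departing trips. -/
structure FeasAugControl (t : N → N → ℕ) (αd : ℝ) (s : AugState N V) (c : N → N → ℤ)
    (uc : AMoDControl N V) : Prop where
  feasControl : FeasControl t s.x c uc
  charge_v : ∀ k i j, uc.v k i j = 1 → αd * (t i j : ℝ) ≤ s.q k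
  charge_w : ∀ k i j, uc.w k i j = 1 → αd * (t i j : ℝ) ≤ s.q k

/-- A feasible trajectory of the undisturbed augmented system from `s` over `n` steps. -/
def FeasAugTraj (t : N → N → ℕ) (αc αd : ℝ) (s : AugState N V) (n : ℕ)
    (ss : ℕ → AugState N V) (cs : ℕ → AMoDControl N V) : Prop :=
  ss 0 = s ∧ ∀ τ < n, FeasAugControl t αd (ss τ) (fun _ _ => 0) (cs τ) ∧
    ss (τ + 1) = augSucc t αc αd (ss τ) (fun _ _ => 0) (cs τ)

/-- The MPC cost of a plan with charging over the horizon `thor`. -/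
def augPlanCost (t : N → N → ℕ) (ρ1 ρ2 ρc : ℝ) (thor : ℕ)
    (ss : ℕ → AugState N V) (cs : ℕ → AMoDControl N V) : ℝ :=
  (∑ τ ∈ Finset.range thor,
      ((Jx (ss (τ + 1)).x : ℝ) + ρ1 * (Ju t (cs τ) : ℝ) - ρ2 * ∑ k : V, (ss (τ + 1)).q k)) -
    ρc * ∑ k : V, (ss thor).q k

/-- An MPC-optimal plan at a feasible augmented state `s`. -/
def AugMPCOptimal (t : N → N → ℕ) (αc αd ρ1 ρ2 ρc : ℝ) (thor : ℕ) (s : AugState N V)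
    (ss : ℕ → AugState N V) (cs : ℕ → AMoDControl N V) : Prop :=
  FeasAugTraj t αc αd s thor ss cs ∧
    ∀ ys ds, FeasAugTraj t αc αd s thor ys ds →
      augPlanCost t ρ1 ρ2 ρc thor ss cs ≤ augPlanCost t ρ1 ρ2 ρc thor ys ds

/-- An (infinite) MPC trajectory of the undisturbed augmented system. -/
def AugMPCTraj (t : N → N → ℕ) (αc αd ρ1 ρ2 ρc : ℝ) (thor : ℕ)
    (ss : ℕ → AugState N V) (cs : ℕ → AMoDControl N V) : Prop :=
  (∀ τ, FeasAugControl t αd (ss τ) (fun _ _ => 0) (cs τ) ∧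
      ss (τ + 1) = augSucc t αc αd (ss τ) (fun _ _ => 0) (cs τ)) ∧
  (∀ τ, ∃ ys ds, AugMPCOptimal t αc αd ρ1 ρ2 ρc thor (ss τ) ys ds ∧ ds 0 = cs τ)

variable {N V : Type} [Fintype N] [DecidableEq N] [Fintype V]

/-- the zero control -/
def zeroCtrl (N V : Type) : AMoDControl N V := ⟨fun _ _ _ => 0, fun _ _ _ => 0⟩

section Basic

variable {t : N → N → ℕ}

lemma t_le_tmax {i j : N} (hij : i ≠ j) : t i j ≤ tmax t := by
  have : (i, j) ∈ (Finset.univ : Finset N).offDiag := by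
    simp [Finset.mem_offDiag, hij]
  exact Finset.le_sup (f := fun p : N × N => t p.1 p.2) this

lemma tmax_pos (hcard : 2 ≤ Fintype.card N) (ht : ∀ i j : N, i ≠ j → 1 ≤ t i j) :
    1 ≤ tmax t := by
  obtain ⟨i⟩ : Nonempty N := Fintype.card_pos_iff.mp (by omega)
  obtain ⟨j, hj⟩ := Fintype.exists_ne_of_one_lt_card (by omega) i
  exact le_trans (ht j i hj) (t_le_tmax hj)

lemma Tmax_succ (hcard : 2 ≤ Fintype.card N) (ht : ∀ i j : N, i ≠ j → 1 ≤ t i j)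
    (i : N) : Tmax t i + 1 = ((Finset.univ : Finset N).erase i).sup (fun j => t j i) := by
  have h1 : 1 ≤ ((Finset.univ : Finset N).erase i).sup (fun j => t j i) := by
    obtain ⟨j, hj⟩ := Fintype.exists_ne_of_one_lt_card (by omega) i
    exact le_trans (ht j i hj) (Finset.le_sup (f := fun j => t j i) (Finset.mem_erase.mpr ⟨hj, Finset.mem_univ j⟩))
  unfold Tmax
  omega

lemma t_le_Tmax_succ (hcard : 2 ≤ Fintype.card N) (ht : ∀ i j : N, i ≠ j → 1 ≤ t i j)
    {i j : N} (hij : j ≠ i) : t j i ≤ Tmax t i + 1 := by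
  rw [Tmax_succ hcard ht]
  exact Finset.le_sup (f := fun j => t j i) (Finset.mem_erase.mpr ⟨hij, Finset.mem_univ j⟩)

lemma Tmax_succ_le_tmax (hcard : 2 ≤ Fintype.card N) (ht : ∀ i j : N, i ≠ j → 1 ≤ t i j)
    (i : N) : Tmax t i + 1 ≤ tmax t := by
  rw [Tmax_succ hcard ht]
  apply Finset.sup_le
  intro j hj
  exact t_le_tmax (Finset.ne_of_mem_erase hj)

end Basic

set_option linter.unusedSectionVars false
set_option linter.unusedVariables false

variable {N V : Type} [Fintype N] [DecidableEq N] [Fintype V]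

/-- total departures of vehicle `k`. -/
def Dep (uc : AMoDControl N V) (k : V) : ℤ := ∑ i : N, ∑ j : N, (uc.v k i j + uc.w k i j)

section Sums

variable {t : N → N → ℕ} {x : AMoDState N V} {uc : AMoDControl N V} {c : N → N → ℤ}

lemma vw_nonneg (h : IsControl uc) (k : V) (i j : N) : 0 ≤ uc.v k i j + uc.w k i j := by
  rcases h.v_bin k i j with h1 | h1 <;> rcases h.w_bin k i j with h2 | h2 <;> omega

lemma Dep_nonneg (h : IsControl uc) (k : V) : 0 ≤ Dep uc k :=
  Finset.sum_nonneg fun i _ => Finset.sum_nonneg fun j _ => vw_nonneg h k i j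

lemma p_nonneg (h : IsState t x) (k : V) (i : N) (T : ℕ) : 0 ≤ x.p k i T := by
  rcases le_or_gt T (Tmax t i) with hT | hT
  · rcases h.p_bin k i T hT with h1 | h1 <;> omega
  · rw [h.p_oob k i T hT]

lemma u_nonneg (h : IsState t x) (k : V) (i : N) : 0 ≤ x.u k i := by
  rcases h.u_bin k i with h1 | h1 <;> omega

lemma pSum_nonneg (h : IsState t x) (k : V) : 0 ≤ pSum t x k :=
  Finset.sum_nonneg fun i _ => Finset.sum_nonneg fun T _ => p_nonneg h k i T

lemma sum_p0_nonneg (h : IsState t x) (k : V) : 0 ≤ ∑ i : N, x.p k i 0 :=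
  Finset.sum_nonneg fun i _ => p_nonneg h k i 0

lemma single_p_le_pSum (h : IsState t x) (k : V) (i : N) {T : ℕ} (hT : T ≤ Tmax t i) :
    x.p k i T ≤ pSum t x k := by
  have h1 : x.p k i T ≤ ∑ T' ∈ Finset.range (Tmax t i + 1), x.p k i T' :=
    Finset.single_le_sum (fun T' _ => p_nonneg h k i T')
      (Finset.mem_range.mpr (by omega))
  exact le_trans h1 (Finset.single_le_sum
    (fun i' _ => Finset.sum_nonneg fun T' _ => p_nonneg h k i' T') (Finset.mem_univ i))

lemma sum_p0_le_pSum (h : IsState t x) (k : V) : (∑ i : N, x.p k i 0) ≤ pSum t x k := by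
  apply Finset.sum_le_sum
  intro i _
  exact Finset.single_le_sum (f := fun T => x.p k i T)
    (fun T' _ => p_nonneg h k i T') (Finset.mem_range.mpr (by omega))

lemma single_u_le_sum (h : IsState t x) (k : V) (i : N) : x.u k i ≤ ∑ i' : N, x.u k i' :=
  Finset.single_le_sum (fun i' _ => u_nonneg h k i') (Finset.mem_univ i)

lemma Dep_le (hx : FeasControl t x c uc) (k : V) :
    Dep uc k ≤ (∑ i : N, x.u k i) + ∑ i : N, x.p k i 0 := by
  rw [← Finset.sum_add_distrib]
  exact Finset.sum_le_sum fun i _ => hx.constrA k i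

/-- auxiliary sum exchange -/
lemma sum_filter_tji {M : ℕ} {i : N} (f : N → ℤ) (hfi : f i = 0)
    (hr : ∀ j, j ≠ i → 1 ≤ t j i ∧ t j i ≤ M + 1) :
    ∑ T ∈ Finset.range (M + 1),
        ∑ j ∈ Finset.univ.filter (fun j => t j i = T + 1), f j = ∑ j : N, f j := by
  have h1 : ∀ T : ℕ, ∑ j ∈ Finset.univ.filter (fun j => t j i = T + 1), f j
      = ∑ j : N, if t j i = T + 1 then f j else 0 := by
    intro T; rw [Finset.sum_filter]
  simp only [h1]
  rw [Finset.sum_comm]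
  apply Finset.sum_congr rfl
  intro j _
  by_cases hj : j = i
  · subst hj
    simp [hfi]
  · obtain ⟨h2, h3⟩ := hr j hj
    rw [Finset.sum_eq_single_of_mem (t j i - 1) (Finset.mem_range.mpr (by omega))]
    · rw [if_pos (by omega)]
    · intro b _ hb
      rw [if_neg (by omega)]

lemma psucc_eq (hx : IsState t x) (hc : IsControl uc) (k : V) (i : N) {T : ℕ}
    (hT : T ≤ Tmax t i) :
    (succState t x c uc).p k i T = x.p k i (T + 1) +
      ∑ j ∈ Finset.univ.filter (fun j => t j i = T + 1), (uc.v k j i + uc.w k j i) := by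
  show (if T < Tmax t i then _ else if T = Tmax t i then _ else (0:ℤ)) = _
  rcases lt_or_eq_of_le hT with h | h
  · rw [if_pos h]
  · rw [if_neg (by omega), if_pos h, hx.p_oob k i (T + 1) (by omega), h]
    ring

lemma pSum_succ (hcard : 2 ≤ Fintype.card N) (ht : ∀ i j : N, i ≠ j → 1 ≤ t i j)
    (hx : IsState t x) (hc : IsControl uc) (k : V) :
    pSum t (succState t x c uc) k = pSum t x k - (∑ i : N, x.p k i 0) + Dep uc k := by
  unfold pSum
  have h1 : ∀ i : N, ∑ T ∈ Finset.range (Tmax t i + 1), (succState t x c uc).p k i T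
      = (∑ T ∈ Finset.range (Tmax t i + 1), x.p k i T) - x.p k i 0
        + ∑ j : N, (uc.v k j i + uc.w k j i) := by
    intro i
    have h2 : ∀ T ∈ Finset.range (Tmax t i + 1), (succState t x c uc).p k i T
        = x.p k i (T + 1) +
          ∑ j ∈ Finset.univ.filter (fun j => t j i = T + 1), (uc.v k j i + uc.w k j i) := by
      intro T hT
      exact psucc_eq hx hc k i (by simpa using Nat.lt_succ_iff.mp (Finset.mem_range.mp hT))
    rw [Finset.sum_congr rfl h2, Finset.sum_add_distrib]
    have h3 : ∑ T ∈ Finset.range (Tmax t i + 1), x.p k i (T + 1)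
        = (∑ T ∈ Finset.range (Tmax t i + 1), x.p k i T) - x.p k i 0 := by
      have h4 := Finset.sum_range_succ' (fun T => x.p k i T) (Tmax t i + 1)
      have h5 : ∑ T ∈ Finset.range (Tmax t i + 1 + 1), x.p k i T
          = (∑ T ∈ Finset.range (Tmax t i + 1), x.p k i T) + x.p k i (Tmax t i + 1) :=
        Finset.sum_range_succ _ _
      rw [hx.p_oob k i (Tmax t i + 1) (by omega)] at h5
      omega
    rw [h3, sum_filter_tji (fun j => uc.v k j i + uc.w k j i)
      (by show uc.v k i i + uc.w k i i = 0; rw [hc.v_diag, hc.w_diag]; ring)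
      (fun j hj => ⟨ht j i hj, t_le_Tmax_succ hcard ht hj⟩)]
  rw [Finset.sum_congr rfl (fun i _ => h1 i)]
  rw [Finset.sum_add_distrib, Finset.sum_sub_distrib]
  have : ∑ i : N, ∑ j : N, (uc.v k j i + uc.w k j i) = Dep uc k := Finset.sum_comm
  rw [this]

lemma usucc_sum (k : V) :
    ∑ i : N, (succState t x c uc).u k i
      = (∑ i : N, x.u k i) + (∑ i : N, x.p k i 0) - Dep uc k := by
  show ∑ i : N, (x.u k i + x.p k i 0 - ∑ j : N, (uc.v k i j + uc.w k i j)) = _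
  rw [Finset.sum_sub_distrib, Finset.sum_add_distrib]
  rfl

end Sums

section Invariance

variable {t : N → N → ℕ} {αc αd : ℝ}

lemma augSucc_x (s : AugState N V) (c : N → N → ℤ) (uc : AMoDControl N V) :
    (augSucc t αc αd s c uc).x = succState t s.x c uc := rfl

lemma augSucc_q (s : AugState N V) (c : N → N → ℤ) (uc : AMoDControl N V) (k : V) :
    (augSucc t αc αd s c uc).q k
      = min (s.q k + αc * (((∑ i : N, (succState t s.x c uc).u k i) : ℤ) : ℝ)) 1
        - αd * (((pSum t (succState t s.x c uc) k) : ℤ) : ℝ) := by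
  show _ = min (s.q k + αc * _) 1 - αd * _
  unfold pSum
  push_cast
  rfl

lemma single_le_pSum_of_nonneg {x : AMoDState N V} {k : V}
    (hp : ∀ (i : N) (T : ℕ), 0 ≤ x.p k i T) (i : N) {T : ℕ} (hT : T ≤ Tmax t i) :
    x.p k i T ≤ pSum t x k := by
  have h1 : x.p k i T ≤ ∑ T' ∈ Finset.range (Tmax t i + 1), x.p k i T' :=
    Finset.single_le_sum (fun T' _ => hp i T') (Finset.mem_range.mpr (by omega))
  exact le_trans h1 (Finset.single_le_sum
    (fun i' _ => Finset.sum_nonneg fun T' _ => hp i' T') (Finset.mem_univ i))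

theorem feas_succ (hcard : 2 ≤ Fintype.card N) (ht : ∀ i j : N, i ≠ j → 1 ≤ t i j)
    (hαc : 0 ≤ αc) (hαd : 0 < αd) (hrange : αd * (tmax t : ℝ) ≤ 1)
    {s : AugState N V} {uc : AMoDControl N V}
    (hs : FeasAugState t αd s) (hu : FeasAugControl t αd s (fun _ _ => 0) uc) :
    FeasAugState t αd (augSucc t αc αd s (fun _ _ => 0) uc) := by
  have hxs : IsState t s.x := hs.feasState.isState
  have hctrl : IsControl uc := hu.feasControl.isControl
  set x' := succState t s.x (fun _ _ => 0) uc with hx'def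
  -- d facts
  have hd_nonneg : ∀ i j, 0 ≤ x'.d i j := by
    intro i j
    have hB := hu.feasControl.constrB i j
    show 0 ≤ s.x.d i j + 0 - ∑ k : V, uc.v k i j
    simp only [add_zero] at hB ⊢
    omega
  have hd_diag : ∀ i, x'.d i i = 0 := by
    intro i
    show s.x.d i i + 0 - ∑ k : V, uc.v k i i = 0
    rw [hxs.d_diag i, Finset.sum_eq_zero fun k _ => hctrl.v_diag k i]
    ring
  -- p nonneg and oob
  have hp_oob : ∀ k i T, Tmax t i < T → x'.p k i T = 0 := by
    intro k i T hT
    show (if T < Tmax t i then _ else if T = Tmax t i then _ else (0:ℤ)) = 0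
    rw [if_neg (by omega), if_neg (by omega)]
  have hpsucc : ∀ k i T, T ≤ Tmax t i → x'.p k i T = s.x.p k i (T + 1) +
      ∑ j ∈ Finset.univ.filter (fun j => t j i = T + 1), (uc.v k j i + uc.w k j i) :=
    fun k i T hT => psucc_eq hxs hctrl k i hT
  have hp_nonneg : ∀ k i T, 0 ≤ x'.p k i T := by
    intro k i T
    rcases le_or_gt T (Tmax t i) with hT | hT
    · rw [hpsucc k i T hT]
      exact add_nonneg (p_nonneg hxs k i (T+1))
        (Finset.sum_nonneg fun j _ => vw_nonneg hctrl k j i)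
    · rw [hp_oob k i T hT]
  -- pSum bounds
  have hpS : ∀ k, pSum t x' k = pSum t s.x k - (∑ i : N, s.x.p k i 0) + Dep uc k :=
    fun k => pSum_succ hcard ht hxs hctrl k
  have hpS_le : ∀ k, pSum t x' k ≤ 1 := by
    intro k
    have h1 := Dep_le hu.feasControl k
    have h2 := hs.feasState.constrUP k
    rw [hpS k]; omega
  have hpS_nonneg : ∀ k, 0 ≤ pSum t x' k :=
    fun k => Finset.sum_nonneg fun i _ => Finset.sum_nonneg fun T _ => hp_nonneg k i T
  have hp_bin : ∀ k i T, T ≤ Tmax t i → x'.p k i T = 0 ∨ x'.p k i T = 1 := by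
    intro k i T hT
    have h1 := single_le_pSum_of_nonneg (x := x') (hp_nonneg k) i hT
    have h2 := hp_nonneg k i T
    have h3 := hpS_le k
    omega
  -- u facts
  have hu_sum : ∀ k, (∑ i : N, x'.u k i)
      = (∑ i : N, s.x.u k i) + (∑ i : N, s.x.p k i 0) - Dep uc k := fun k => usucc_sum k
  have hUP : ∀ k, (∑ i : N, x'.u k i) + pSum t x' k = 1 := by
    intro k
    rw [hu_sum k, hpS k]
    have := hs.feasState.constrUP k
    omega
  have hu_nonneg : ∀ k i, 0 ≤ x'.u k i := by
    intro k i
    have hA := hu.feasControl.constrA k i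
    show 0 ≤ s.x.u k i + s.x.p k i 0 - ∑ j : N, (uc.v k i j + uc.w k i j)
    omega
  have hu_bin : ∀ k i, x'.u k i = 0 ∨ x'.u k i = 1 := by
    intro k i
    have h1 : s.x.u k i ≤ ∑ i' : N, s.x.u k i' := single_u_le_sum hxs k i
    have h2 : s.x.p k i 0 ≤ pSum t s.x k :=
      single_le_pSum_of_nonneg (p_nonneg hxs k) i (by omega)
    have h3 := hs.feasState.constrUP k
    have h4 : 0 ≤ ∑ j : N, (uc.v k i j + uc.w k i j) :=
      Finset.sum_nonneg fun j _ => vw_nonneg hctrl k i j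
    have h5 := hu_nonneg k i
    have h6 : x'.u k i = s.x.u k i + s.x.p k i 0 - ∑ j : N, (uc.v k i j + uc.w k i j) := rfl
    omega
  have hxs' : IsState t x' := ⟨hd_nonneg, hd_diag, hp_bin, hp_oob, hu_bin⟩
  have hfs' : FeasState t x' := ⟨hxs', hpS_le, hUP⟩
  -- the charge part
  have hq : ∀ k, (augSucc t αc αd s (fun _ _ => 0) uc).q k
      = min (s.q k + αc * (((∑ i : N, x'.u k i) : ℤ) : ℝ)) 1
        - αd * (((pSum t x' k) : ℤ) : ℝ) := fun k => augSucc_q s _ uc k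
  -- star claim
  have star : ∀ k i T, T ≤ Tmax t i → x'.p k i T = 1 →
      αd * ((T : ℝ) + 1) ≤ min (s.q k) 1 := by
    intro k i T hT hp1
    have hTt : (T : ℝ) + 1 ≤ (tmax t : ℝ) := by
      have h7 := Tmax_succ_le_tmax hcard ht i
      have h8 : (T : ℕ) + 1 ≤ tmax t := by omega
      exact_mod_cast h8
    have hle1 : αd * ((T : ℝ) + 1) ≤ 1 := by
      calc αd * ((T : ℝ) + 1) ≤ αd * (tmax t : ℝ) :=
            mul_le_mul_of_nonneg_left hTt (le_of_lt hαd)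
        _ ≤ 1 := hrange
    rw [hpsucc k i T hT] at hp1
    have hp01 : s.x.p k i (T+1) = 0 ∨ s.x.p k i (T+1) = 1 := by
      rcases le_or_gt (T+1) (Tmax t i) with h | h
      · exact hxs.p_bin k i (T+1) h
      · exact Or.inl (hxs.p_oob k i (T+1) h)
    rcases hp01 with h0 | h1
    · -- arrival case
      rw [h0, zero_add] at hp1
      have hne : ∃ j ∈ Finset.univ.filter (fun j => t j i = T + 1),
          uc.v k j i + uc.w k j i ≠ 0 :=
        Finset.exists_ne_zero_of_sum_ne_zero (by rw [hp1]; norm_num)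
      obtain ⟨j, hjmem, hjne⟩ := hne
      have hji : t j i = T + 1 := by
        have := (Finset.mem_filter.mp hjmem).2
        simpa using this
      have hqk : αd * (t j i : ℝ) ≤ s.q k := by
        rcases hctrl.v_bin k j i with hv | hv
        · have hw : uc.w k j i = 1 := by
            rcases hctrl.w_bin k j i with hw | hw
            · omega
            · exact hw
          exact hu.charge_w k j i hw
        · exact hu.charge_v k j i hv
      rw [hji] at hqk
      push_cast at hqk
      exact le_min (by linarith) hle1
    · -- in-transit case
      have hqr := hs.q_range k i (T+1) h1
      push_cast at hqr
      exact le_min (by linarith) hle1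
  -- case analysis on pSum'
  have hP01 : ∀ k, pSum t x' k = 0 ∨ pSum t x' k = 1 := by
    intro k
    have h1 := hpS_nonneg k
    have h2 := hpS_le k
    omega
  have master : ∀ k, 0 ≤ (augSucc t αc αd s (fun _ _ => 0) uc).q k ∧
      (augSucc t αc αd s (fun _ _ => 0) uc).q k ≤ 1 ∧
      ∀ i T, x'.p k i T = 1 → αd * (T : ℝ) ≤ (augSucc t αc αd s (fun _ _ => 0) uc).q k := by
    intro k
    rcases hP01 k with h0 | h1
    · -- no vehicle in transit
      have hU : (∑ i : N, x'.u k i) = 1 := by have := hUP k; omega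
      have hallz : ∀ i T, T ≤ Tmax t i → x'.p k i T = 0 := by
        intro i T hT
        have h2 := single_le_pSum_of_nonneg (x := x') (hp_nonneg k) i hT
        have h3 := hp_nonneg k i T
        omega
      have hq0 := hs.q_nonneg k
      rw [hq k, h0, hU]
      push_cast
      refine ⟨?_, ?_, ?_⟩
      · have : (0:ℝ) ≤ min (s.q k + αc * 1) 1 := le_min (by linarith) (by norm_num)
        linarith
      · have : min (s.q k + αc * 1) 1 ≤ 1 := min_le_right _ _
        linarith
      · intro i T hp1
        exfalso
        rcases le_or_gt T (Tmax t i) with hT | hT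
        · rw [hallz i T hT] at hp1; exact absurd hp1 (by norm_num)
        · rw [hp_oob k i T hT] at hp1; exact absurd hp1 (by norm_num)
    · -- vehicle in transit
      have hU0 : (∑ i : N, x'.u k i) = 0 := by have := hUP k; omega
      have hone : ∃ i T, T ≤ Tmax t i ∧ x'.p k i T = 1 := by
        have h1' : (∑ i : N, ∑ T ∈ Finset.range (Tmax t i + 1), x'.p k i T) ≠ 0 := by
          show pSum t x' k ≠ 0
          omega
        obtain ⟨i, -, hi⟩ := Finset.exists_ne_zero_of_sum_ne_zero h1'
        obtain ⟨T, hTmem, hT⟩ := Finset.exists_ne_zero_of_sum_ne_zero hi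
        have hTle : T ≤ Tmax t i := by
          have := Finset.mem_range.mp hTmem
          omega
        refine ⟨i, T, hTle, ?_⟩
        rcases hp_bin k i T hTle with h | h
        · exact absurd h hT
        · exact h
      obtain ⟨i0, T0, hT0, hp10⟩ := hone
      have hstar0 := star k i0 T0 hT0 hp10
      have hT0c : (0:ℝ) ≤ (T0 : ℝ) := Nat.cast_nonneg T0
      have hq' : (augSucc t αc αd s (fun _ _ => 0) uc).q k = min (s.q k) 1 - αd := by
        rw [hq k, hU0, h1]
        push_cast
        ring_nf
      refine ⟨?_, ?_, ?_⟩
      · rw [hq']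
        nlinarith
      · rw [hq']
        have : min (s.q k) 1 ≤ 1 := min_le_right _ _
        linarith
      · intro i T hp1
        have hT : T ≤ Tmax t i := by
          by_contra hcon
          rw [hp_oob k i T (by omega)] at hp1
          exact absurd hp1 (by norm_num)
        have hst := star k i T hT hp1
        rw [hq']
        have : αd * ((T : ℝ) + 1) = αd * (T : ℝ) + αd := by ring
        linarith
  exact ⟨hfs', fun k => (master k).1, fun k => (master k).2.1,
    fun k i T h => (master k).2.2 i T h⟩

end Invariance

set_option linter.unusedSectionVars false
set_option linter.unusedVariables false

variable {N V : Type} [Fintype N] [DecidableEq N] [Fintype V]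

section StateLevel

variable {t : N → N → ℕ} {αc αd : ℝ}

/-- one idle step -/
def idleStep (t : N → N → ℕ) (αc αd : ℝ) (s : AugState N V) : AugState N V :=
  augSucc t αc αd s (fun _ _ => 0) (zeroCtrl N V)

lemma zeroCtrl_isControl : IsControl (zeroCtrl N V) :=
  ⟨fun _ _ _ => Or.inl rfl, fun _ _ _ => Or.inl rfl, fun _ _ => rfl, fun _ _ => rfl⟩

lemma zeroCtrl_feas {s : AugState N V} (hs : FeasAugState t αd s) :
    FeasAugControl t αd s (fun _ _ => 0) (zeroCtrl N V) := by
  refine ⟨⟨zeroCtrl_isControl, ?_, ?_⟩, ?_, ?_⟩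
  · intro k i
    have h1 := u_nonneg hs.feasState.isState k i
    have h2 := p_nonneg hs.feasState.isState k i 0
    have h3 : ∑ j : N, ((zeroCtrl N V).v k i j + (zeroCtrl N V).w k i j) = 0 :=
      Finset.sum_eq_zero fun j _ => rfl
    rw [h3]; omega
  · intro i j
    have h1 := hs.feasState.isState.d_nonneg i j
    have h3 : ∑ k : V, (zeroCtrl N V).v k i j = 0 := Finset.sum_eq_zero fun k _ => rfl
    rw [h3]; omega
  · intro k i j h; exact absurd h (by simp [zeroCtrl])
  · intro k i j h; exact absurd h (by simp [zeroCtrl])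

lemma idleStep_feas (hcard : 2 ≤ Fintype.card N) (ht : ∀ i j : N, i ≠ j → 1 ≤ t i j)
    (hαc : 0 ≤ αc) (hαd : 0 < αd) (hrange : αd * (tmax t : ℝ) ≤ 1)
    {s : AugState N V} (hs : FeasAugState t αd s) :
    FeasAugState t αd (idleStep t αc αd s) :=
  feas_succ hcard ht hαc hαd hrange hs (zeroCtrl_feas hs)

lemma succ_d_zeroc {s : AugState N V} {uc : AMoDControl N V} (i j : N) :
    (augSucc t αc αd s (fun _ _ => 0) uc).x.d i j = s.x.d i j - ∑ k : V, uc.v k i j := by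
  show s.x.d i j + 0 - _ = _
  ring

lemma idleStep_d {s : AugState N V} (i j : N) :
    (idleStep t αc αd s).x.d i j = s.x.d i j := by
  rw [idleStep, succ_d_zeroc]
  have h3 : ∑ k : V, (zeroCtrl N V).v k i j = 0 := Finset.sum_eq_zero fun k _ => rfl
  rw [h3]; ring

lemma idleStep_iter_feas_d (hcard : 2 ≤ Fintype.card N) (ht : ∀ i j : N, i ≠ j → 1 ≤ t i j)
    (hαc : 0 ≤ αc) (hαd : 0 < αd) (hrange : αd * (tmax t : ℝ) ≤ 1)
    {s : AugState N V} (hs : FeasAugState t αd s) (m : ℕ) :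
    FeasAugState t αd ((idleStep t αc αd)^[m] s) ∧
      ∀ i j, ((idleStep t αc αd)^[m] s).x.d i j = s.x.d i j := by
  induction m with
  | zero => exact ⟨hs, fun i j => rfl⟩
  | succ m ih =>
    rw [Function.iterate_succ_apply']
    exact ⟨idleStep_feas hcard ht hαc hαd hrange ih.1,
      fun i j => (idleStep_d i j).trans (ih.2 i j)⟩

/-- availability of vehicle k0 at station i0 -/
def Avail (x : AMoDState N V) (k0 : V) (i0 : N) : Prop :=
  1 ≤ x.u k0 i0 + x.p k0 i0 0

lemma avail_sums {x : AMoDState N V} {k0 : V} {i0 : N} (hx : FeasState t x)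
    (hav : Avail x k0 i0) :
    pSum t x k0 = ∑ i : N, x.p k0 i 0 := by
  have hxs := hx.isState
  have hUP := hx.constrUP k0
  have h1 : x.u k0 i0 ≤ ∑ i : N, x.u k0 i := single_u_le_sum hxs k0 i0
  have h2 : x.p k0 i0 0 ≤ ∑ i : N, x.p k0 i 0 :=
    Finset.single_le_sum (fun i _ => p_nonneg hxs k0 i 0) (Finset.mem_univ i0)
  have h3 := sum_p0_le_pSum hxs k0
  have h4 := sum_p0_nonneg hxs k0
  have h5 := pSum_nonneg hxs k0
  have h6 : 0 ≤ ∑ i : N, x.u k0 i := Finset.sum_nonneg fun i _ => u_nonneg hxs k0 i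
  rcases hxs.u_bin k0 i0 with hu | hu
  · -- then p k0 i0 0 = 1
    have hp1 : x.p k0 i0 0 = 1 := by
      rcases hxs.p_bin k0 i0 0 (by omega) with h | h
      · unfold Avail at hav; omega
      · exact h
    omega
  · -- u = 1 : pSum = 0 and sum p0 = 0
    omega

/-- after one idle step from an available configuration the vehicle waits and charges -/
lemma idle_avail (hcard : 2 ≤ Fintype.card N) (ht : ∀ i j : N, i ≠ j → 1 ≤ t i j)
    {s : AugState N V} {k0 : V} {i0 : N}
    (hs : FeasAugState t αd s) (hav : Avail s.x k0 i0) :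
    (idleStep t αc αd s).x.u k0 i0 = 1 ∧
      (idleStep t αc αd s).q k0 = min (s.q k0 + αc) 1 := by
  have hxs := hs.feasState.isState
  have hUP := hs.feasState.constrUP k0
  have hps := avail_sums hs.feasState hav
  have hDep : Dep (zeroCtrl N V) k0 = 0 := by
    unfold Dep
    exact Finset.sum_eq_zero fun i _ => Finset.sum_eq_zero fun j _ => rfl
  have hpS' : pSum t (idleStep t αc αd s).x k0 = 0 := by
    show pSum t (succState t s.x (fun _ _ => 0) (zeroCtrl N V)) k0 = 0
    rw [pSum_succ hcard ht hxs zeroCtrl_isControl, hDep]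
    omega
  have husum : (∑ i : N, (idleStep t αc αd s).x.u k0 i) = 1 := by
    show (∑ i : N, (succState t s.x (fun _ _ => 0) (zeroCtrl N V)).u k0 i) = 1
    rw [usucc_sum, hDep]
    omega
  have hu' : (idleStep t αc αd s).x.u k0 i0 = 1 := by
    have h1 : s.x.u k0 i0 ≤ ∑ i : N, s.x.u k0 i := single_u_le_sum hxs k0 i0
    have h2 : s.x.p k0 i0 0 ≤ pSum t s.x k0 :=
      single_le_pSum_of_nonneg (p_nonneg hxs k0) i0 (by omega)
    have h3 : ∑ j : N, ((zeroCtrl N V).v k0 i0 j + (zeroCtrl N V).w k0 i0 j) = 0 :=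
      Finset.sum_eq_zero fun j _ => rfl
    have h6 : (idleStep t αc αd s).x.u k0 i0
        = s.x.u k0 i0 + s.x.p k0 i0 0 - ∑ j : N, ((zeroCtrl N V).v k0 i0 j + (zeroCtrl N V).w k0 i0 j) := rfl
    unfold Avail at hav
    omega
  refine ⟨hu', ?_⟩
  have hqq := augSucc_q (t := t) (αc := αc) (αd := αd) s (fun _ _ => 0) (zeroCtrl N V) k0
  show (augSucc t αc αd s (fun _ _ => 0) (zeroCtrl N V)).q k0 = _
  rw [hqq]
  have e1 : pSum t (succState t s.x (fun _ _ => 0) (zeroCtrl N V)) k0 = 0 := hpS'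
  have e2 : (∑ i : N, (succState t s.x (fun _ _ => 0) (zeroCtrl N V)).u k0 i) = 1 := husum
  rw [e1, e2]
  push_cast
  ring_nf

/-- charging for `m` steps -/
lemma idle_charge (hcard : 2 ≤ Fintype.card N) (ht : ∀ i j : N, i ≠ j → 1 ≤ t i j)
    (hαc : 0 ≤ αc) (hαd : 0 < αd) (hrange : αd * (tmax t : ℝ) ≤ 1)
    {s : AugState N V} {k0 : V} {i0 : N}
    (hs : FeasAugState t αd s) (hav : Avail s.x k0 i0) :
    ∀ m, 1 ≤ m →
      ((idleStep t αc αd)^[m] s).x.u k0 i0 = 1 ∧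
      min (s.q k0 + m * αc) 1 ≤ ((idleStep t αc αd)^[m] s).q k0 := by
  intro m hm
  induction m with
  | zero => omega
  | succ m ih =>
    rcases Nat.eq_or_lt_of_le hm with h1 | h1
    · -- m + 1 = 1
      have hm0 : m = 0 := by omega
      subst hm0
      obtain ⟨ha, hb⟩ := idle_avail hcard ht hs hav
      rw [Function.iterate_one]
      refine ⟨ha, ?_⟩
      rw [hb]
      push_cast
      norm_num
    · have hm1 : 1 ≤ m := by omega
      obtain ⟨ihu, ihq⟩ := ih hm1
      have hfm : FeasAugState t αd ((idleStep t αc αd)^[m] s) :=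
        (idleStep_iter_feas_d hcard ht hαc hαd hrange hs m).1
      have havm : Avail ((idleStep t αc αd)^[m] s).x k0 i0 := by
        unfold Avail
        have := p_nonneg hfm.feasState.isState k0 i0 0
        omega
      obtain ⟨ha, hb⟩ := idle_avail hcard ht (αc := αc) hfm havm
      rw [Function.iterate_succ_apply']
      refine ⟨ha, ?_⟩
      rw [hb]
      have h2 : min (s.q k0 + (↑m + 1) * αc) 1 ≤ min (((idleStep t αc αd)^[m] s).q k0 + αc) 1 := by
        rcases min_cases (s.q k0 + (m:ℝ) * αc) 1 with ⟨he, hle⟩ | ⟨he, hle⟩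
        · apply le_min
          · have : s.q k0 + (↑m + 1) * αc ≤ ((idleStep t αc αd)^[m] s).q k0 + αc := by
              rw [he] at ihq
              linarith
            exact le_trans (min_le_left _ _) this
          · exact min_le_right _ _
        · apply le_min
          · have : (1:ℝ) ≤ ((idleStep t αc αd)^[m] s).q k0 + αc := by
              rw [he] at ihq
              linarith
            exact le_trans (min_le_right _ _) this
          · exact min_le_right _ _
      push_cast at h2 ⊢
      exact h2

lemma idle_p_shift {s : AugState N V} {k0 : V} {i1 : N} {T : ℕ}
    (hs : FeasAugState t αd s) (hp : s.x.p k0 i1 (T + 1) = 1) :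
    (idleStep t αc αd s).x.p k0 i1 T = 1 := by
  have hxs := hs.feasState.isState
  have hTle : T + 1 ≤ Tmax t i1 := by
    by_contra hcon
    rw [hxs.p_oob k0 i1 (T+1) (by omega)] at hp
    exact absurd hp (by norm_num)
  have h1 : (idleStep t αc αd s).x.p k0 i1 T
      = s.x.p k0 i1 (T + 1) + ∑ j ∈ Finset.univ.filter (fun j => t j i1 = T + 1),
          ((zeroCtrl N V).v k0 j i1 + (zeroCtrl N V).w k0 j i1) :=
    psucc_eq hxs zeroCtrl_isControl k0 i1 (by omega)
  rw [h1, hp]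
  simp [zeroCtrl]

lemma idle_transit (hcard : 2 ≤ Fintype.card N) (ht : ∀ i j : N, i ≠ j → 1 ≤ t i j)
    (hαc : 0 ≤ αc) (hαd : 0 < αd) (hrange : αd * (tmax t : ℝ) ≤ 1)
    {k0 : V} {i1 : N} : ∀ (T : ℕ) (s : AugState N V), FeasAugState t αd s →
    s.x.p k0 i1 T = 1 → ((idleStep t αc αd)^[T] s).x.p k0 i1 0 = 1 := by
  intro T
  induction T with
  | zero => intro s hs hp; exact hp
  | succ T ih =>
    intro s hs hp
    rw [Function.iterate_succ_apply]
    exact ih (idleStep t αc αd s) (idleStep_feas hcard ht hαc hαd hrange hs)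
      (idle_p_shift hs hp)

lemma p_all_zero_of_u_one {x : AMoDState N V} {k0 : V} {i0 : N}
    (hx : FeasState t x) (hu1 : x.u k0 i0 = 1) : ∀ i T, x.p k0 i T = 0 := by
  intro i T
  have hxs := hx.isState
  have hUP := hx.constrUP k0
  have h1 : x.u k0 i0 ≤ ∑ i : N, x.u k0 i := single_u_le_sum hxs k0 i0
  have hp0 : pSum t x k0 ≤ 0 := by
    have := pSum_nonneg hxs k0
    omega
  rcases le_or_gt T (Tmax t i) with hT | hT
  · have h2 : x.p k0 i T ≤ pSum t x k0 := single_le_pSum_of_nonneg (p_nonneg hxs k0) i hT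
    have h3 := p_nonneg hxs k0 i T
    omega
  · exact hxs.p_oob k0 i T hT

end StateLevel

section Dispatch

attribute [local instance] Classical.propDecidable

variable {t : N → N → ℕ} {αc αd : ℝ}

open Classical in
/-- single rebalancing trip -/
noncomputable def ctrlW (k0 : V) (i0 i1 : N) : AMoDControl N V :=
  ⟨fun _ _ _ => 0, fun k i j => if k = k0 ∧ i = i0 ∧ j = i1 then 1 else 0⟩

open Classical in
/-- single customer trip -/
noncomputable def ctrlV (k0 : V) (i0 j0 : N) : AMoDControl N V :=
  ⟨fun k i j => if k = k0 ∧ i = i0 ∧ j = j0 then 1 else 0, fun _ _ _ => 0⟩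

lemma ctrlW_isControl {k0 : V} {i0 i1 : N} (h01 : i0 ≠ i1) :
    IsControl (ctrlW (V := V) k0 i0 i1) := by
  refine ⟨fun k i j => Or.inl rfl, fun k i j => ?_, fun k i => rfl, fun k i => ?_⟩
  · show (if k = k0 ∧ i = i0 ∧ j = i1 then (1:ℤ) else 0) = 0
        ∨ (if k = k0 ∧ i = i0 ∧ j = i1 then (1:ℤ) else 0) = 1
    split_ifs with h
    · exact Or.inr rfl
    · exact Or.inl rfl
  · show (if k = k0 ∧ i = i0 ∧ i = i1 then (1:ℤ) else 0) = 0
    rw [if_neg]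
    rintro ⟨h1, h2, h3⟩
    exact h01 (h2 ▸ h3)

lemma ctrlV_isControl {k0 : V} {i0 j0 : N} (h01 : i0 ≠ j0) :
    IsControl (ctrlV (V := V) k0 i0 j0) := by
  refine ⟨fun k i j => ?_, fun k i j => Or.inl rfl, fun k i => ?_, fun k i => rfl⟩
  · show (if k = k0 ∧ i = i0 ∧ j = j0 then (1:ℤ) else 0) = 0
        ∨ (if k = k0 ∧ i = i0 ∧ j = j0 then (1:ℤ) else 0) = 1
    split_ifs with h
    · exact Or.inr rfl
    · exact Or.inl rfl
  · show (if k = k0 ∧ i = i0 ∧ i = j0 then (1:ℤ) else 0) = 0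
    rw [if_neg]
    rintro ⟨h1, h2, h3⟩
    exact h01 (h2 ▸ h3)

lemma ctrlW_row (k0 : V) (i0 i1 : N) (k : V) (i : N) :
    (∑ j : N, ((ctrlW (V := V) k0 i0 i1).v k i j + (ctrlW k0 i0 i1).w k i j))
      = if k = k0 ∧ i = i0 then 1 else 0 := by
  show (∑ j : N, ((0:ℤ) + if k = k0 ∧ i = i0 ∧ j = i1 then 1 else 0)) = _
  simp only [zero_add]
  split_ifs with h
  · obtain ⟨h1, h2⟩ := h
    subst h1; subst h2
    rw [Finset.sum_eq_single_of_mem i1 (Finset.mem_univ i1)]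
    · rw [if_pos ⟨rfl, rfl, rfl⟩]
    · intro b _ hb
      rw [if_neg (by tauto)]
  · apply Finset.sum_eq_zero
    intro j _
    rw [if_neg (by tauto)]

lemma ctrlV_row (k0 : V) (i0 j0 : N) (k : V) (i : N) :
    (∑ j : N, ((ctrlV (V := V) k0 i0 j0).v k i j + (ctrlV k0 i0 j0).w k i j))
      = if k = k0 ∧ i = i0 then 1 else 0 := by
  show (∑ j : N, ((if k = k0 ∧ i = i0 ∧ j = j0 then 1 else 0) + (0:ℤ))) = _
  simp only [add_zero]
  split_ifs with h
  · obtain ⟨h1, h2⟩ := h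
    subst h1; subst h2
    rw [Finset.sum_eq_single_of_mem j0 (Finset.mem_univ j0)]
    · rw [if_pos ⟨rfl, rfl, rfl⟩]
    · intro b _ hb
      rw [if_neg (by tauto)]
  · apply Finset.sum_eq_zero
    intro j _
    rw [if_neg (by tauto)]

lemma ctrlV_col (k0 : V) (i0 j0 : N) (i j : N) :
    (∑ k : V, (ctrlV (V := V) k0 i0 j0).v k i j) = if i = i0 ∧ j = j0 then 1 else 0 := by
  show (∑ k : V, if k = k0 ∧ i = i0 ∧ j = j0 then (1:ℤ) else 0) = _
  split_ifs with h
  · rw [Finset.sum_eq_single_of_mem k0 (Finset.mem_univ k0)]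
    · rw [if_pos ⟨rfl, h⟩]
    · intro b _ hb
      rw [if_neg (by tauto)]
  · apply Finset.sum_eq_zero
    intro k _
    rw [if_neg (by tauto)]

lemma ctrlW_feas {s : AugState N V} {k0 : V} {i0 i1 : N}
    (hs : FeasAugState t αd s) (hav : Avail s.x k0 i0) (h01 : i0 ≠ i1)
    (hq : αd * (t i0 i1 : ℝ) ≤ s.q k0) :
    FeasAugControl t αd s (fun _ _ => 0) (ctrlW k0 i0 i1) := by
  refine ⟨⟨ctrlW_isControl h01, ?_, ?_⟩, ?_, ?_⟩
  · intro k i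
    rw [ctrlW_row]
    have h1 := u_nonneg hs.feasState.isState k i
    have h2 := p_nonneg hs.feasState.isState k i 0
    split_ifs with h
    · obtain ⟨hk, hi⟩ := h
      subst hk; subst hi
      unfold Avail at hav
      omega
    · omega
  · intro i j
    have h1 := hs.feasState.isState.d_nonneg i j
    have h3 : ∑ k : V, (ctrlW (V := V) k0 i0 i1).v k i j = 0 :=
      Finset.sum_eq_zero fun k _ => rfl
    rw [h3]; omega
  · intro k i j h
    exact absurd h (by simp [ctrlW])
  · intro k i j h
    have hcond : k = k0 ∧ i = i0 ∧ j = i1 := by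
      by_contra hcon
      rw [show (ctrlW (V := V) k0 i0 i1).w k i j = if k = k0 ∧ i = i0 ∧ j = i1 then 1 else 0
        from rfl, if_neg hcon] at h
      exact absurd h (by norm_num)
    obtain ⟨hk, hi, hj⟩ := hcond
    subst hk; subst hi; subst hj
    exact hq

lemma ctrlV_feas {s : AugState N V} {k0 : V} {i0 j0 : N}
    (hs : FeasAugState t αd s) (hav : Avail s.x k0 i0) (h01 : i0 ≠ j0)
    (hd : 1 ≤ s.x.d i0 j0) (hq : αd * (t i0 j0 : ℝ) ≤ s.q k0) :
    FeasAugControl t αd s (fun _ _ => 0) (ctrlV k0 i0 j0) := by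
  refine ⟨⟨ctrlV_isControl h01, ?_, ?_⟩, ?_, ?_⟩
  · intro k i
    rw [ctrlV_row]
    have h1 := u_nonneg hs.feasState.isState k i
    have h2 := p_nonneg hs.feasState.isState k i 0
    split_ifs with h
    · obtain ⟨hk, hi⟩ := h
      subst hk; subst hi
      unfold Avail at hav
      omega
    · omega
  · intro i j
    rw [ctrlV_col]
    have h1 := hs.feasState.isState.d_nonneg i j
    split_ifs with h
    · obtain ⟨hi, hj⟩ := h
      subst hi; subst hj
      omega
    · omega
  · intro k i j h
    have hcond : k = k0 ∧ i = i0 ∧ j = j0 := by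
      by_contra hcon
      rw [show (ctrlV (V := V) k0 i0 j0).v k i j = if k = k0 ∧ i = i0 ∧ j = j0 then 1 else 0
        from rfl, if_neg hcon] at h
      exact absurd h (by norm_num)
    obtain ⟨hk, hi, hj⟩ := hcond
    subst hk; subst hi; subst hj
    exact hq
  · intro k i j h
    exact absurd h (by simp [ctrlV])

lemma ctrlW_succ_p (hcard : 2 ≤ Fintype.card N) (ht : ∀ i j : N, i ≠ j → 1 ≤ t i j)
    {s : AugState N V} {k0 : V} {i0 i1 : N}
    (hs : FeasAugState t αd s) (hu1 : s.x.u k0 i0 = 1) (h01 : i0 ≠ i1) :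
    (augSucc t αc αd s (fun _ _ => 0) (ctrlW k0 i0 i1)).x.p k0 i1 (t i0 i1 - 1) = 1 := by
  have hxs := hs.feasState.isState
  have ht1 : 1 ≤ t i0 i1 := ht i0 i1 h01
  have hTle : t i0 i1 - 1 ≤ Tmax t i1 := by
    have := t_le_Tmax_succ hcard ht (i := i1) (j := i0) h01
    omega
  have h1 : (augSucc t αc αd s (fun _ _ => 0) (ctrlW k0 i0 i1)).x.p k0 i1 (t i0 i1 - 1)
      = s.x.p k0 i1 (t i0 i1 - 1 + 1) +
        ∑ j ∈ Finset.univ.filter (fun j => t j i1 = t i0 i1 - 1 + 1),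
          ((ctrlW (V := V) k0 i0 i1).v k0 j i1 + (ctrlW k0 i0 i1).w k0 j i1) :=
    psucc_eq hxs (ctrlW_isControl h01) k0 i1 hTle
  rw [h1, p_all_zero_of_u_one hs.feasState hu1 i1 _, zero_add]
  rw [Finset.sum_eq_single_of_mem i0]
  · show (0:ℤ) + (if k0 = k0 ∧ i0 = i0 ∧ i1 = i1 then 1 else 0) = 1
    rw [if_pos ⟨rfl, rfl, rfl⟩]
    ring
  · rw [Finset.mem_filter]
    exact ⟨Finset.mem_univ i0, by omega⟩
  · intro b _ hb
    show (0:ℤ) + (if k0 = k0 ∧ b = i0 ∧ i1 = i1 then 1 else 0) = 0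
    rw [if_neg (by tauto)]
    ring

lemma ctrlW_succ_d {s : AugState N V} {k0 : V} {i0 i1 : N} (i j : N) :
    (augSucc t αc αd s (fun _ _ => 0) (ctrlW k0 i0 i1)).x.d i j = s.x.d i j := by
  rw [augSucc_x, show (succState t s.x (fun _ _ => 0) (ctrlW k0 i0 i1)).d i j
    = s.x.d i j + 0 - ∑ k : V, (ctrlW (V := V) k0 i0 i1).v k i j from rfl]
  have h3 : ∑ k : V, (ctrlW (V := V) k0 i0 i1).v k i j = 0 :=
    Finset.sum_eq_zero fun k _ => rfl
  rw [h3]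
  ring

lemma ctrlV_succ_d {s : AugState N V} {k0 : V} {i0 j0 : N} (i j : N) :
    (augSucc t αc αd s (fun _ _ => 0) (ctrlV k0 i0 j0)).x.d i j
      = s.x.d i j - if i = i0 ∧ j = j0 then 1 else 0 := by
  rw [augSucc_x, show (succState t s.x (fun _ _ => 0) (ctrlV k0 i0 j0)).d i j
    = s.x.d i j + 0 - ∑ k : V, (ctrlV (V := V) k0 i0 j0).v k i j from rfl]
  rw [ctrlV_col]
  ring

lemma Ju_zeroCtrl : Ju t (zeroCtrl N V) = 0 := by
  unfold Ju zeroCtrl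
  simp

lemma Ju_ctrlV (k0 : V) (i0 j0 : N) : Ju t (ctrlV (V := V) k0 i0 j0) = 0 := by
  unfold Ju ctrlV
  simp

lemma Ju_ctrlW (k0 : V) (i0 i1 : N) : Ju t (ctrlW (V := V) k0 i0 i1) = (t i0 i1 : ℤ) := by
  unfold Ju
  show (∑ k : V, ∑ i : N, ∑ j : N, (t i j : ℤ) * (if k = k0 ∧ i = i0 ∧ j = i1 then 1 else 0)) = _
  rw [Finset.sum_eq_single_of_mem k0 (Finset.mem_univ k0)]
  · rw [Finset.sum_eq_single_of_mem i0 (Finset.mem_univ i0)]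
    · rw [Finset.sum_eq_single_of_mem i1 (Finset.mem_univ i1)]
      · rw [if_pos ⟨rfl, rfl, rfl⟩]; ring
      · intro b _ hb; rw [if_neg (by tauto)]; ring
    · intro b _ hb
      apply Finset.sum_eq_zero
      intro j _; rw [if_neg (by tauto)]; ring
  · intro b _ hb
    apply Finset.sum_eq_zero
    intro i _
    apply Finset.sum_eq_zero
    intro j _; rw [if_neg (by tauto)]; ring

lemma Ju_nonneg {uc : AMoDControl N V} (hc : IsControl uc) : 0 ≤ Ju t uc := by
  unfold Ju
  apply Finset.sum_nonneg; intro k _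
  apply Finset.sum_nonneg; intro i _
  apply Finset.sum_nonneg; intro j _
  have h1 := hc.w_bin k i j
  have h2 : (0:ℤ) ≤ (t i j : ℤ) := Int.ofNat_nonneg _
  rcases h1 with h | h <;> rw [h] <;> nlinarith

end Dispatch

set_option linter.unusedSectionVars false
set_option linter.unusedVariables false
set_option maxHeartbeats 800000

variable {N V : Type} [Fintype N] [DecidableEq N] [Fintype V]

/-- states of a plan generated by controls `cs` from `s` -/
def planStates (t : N → N → ℕ) (αc αd : ℝ) (s : AugState N V)
    (cs : ℕ → AMoDControl N V) : ℕ → AugState N V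
  | 0 => s
  | n + 1 => augSucc t αc αd (planStates t αc αd s cs n) (fun _ _ => 0) (cs n)

section TrajLevel

attribute [local instance] Classical.propDecidable

variable {t : N → N → ℕ} {αc αd : ℝ}

lemma planStates_zero_seg {s : AugState N V} {cs : ℕ → AMoDControl N V} {τ m : ℕ}
    (h : ∀ r, r < m → cs (τ + r) = zeroCtrl N V) :
    planStates t αc αd s cs (τ + m) = (idleStep t αc αd)^[m] (planStates t αc αd s cs τ) := by
  induction m with
  | zero => rfl
  | succ m ih =>
    have h1 : τ + (m + 1) = (τ + m) + 1 := by omega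
    rw [h1]
    show augSucc t αc αd (planStates t αc αd s cs (τ + m)) (fun _ _ => 0) (cs (τ + m)) = _
    rw [ih (fun r hr => h r (by omega)), h (m) (by omega), Function.iterate_succ_apply']
    rfl

lemma planStates_append {s : AugState N V} {cs : ℕ → AMoDControl N V} (a : ℕ) :
    ∀ m, planStates t αc αd s cs (a + m)
      = planStates t αc αd (planStates t αc αd s cs a) (fun r => cs (a + r)) m := by
  intro m
  induction m with
  | zero => rfl
  | succ m ih =>
    have h1 : a + (m + 1) = (a + m) + 1 := by omega
    rw [h1]
    show augSucc t αc αd (planStates t αc αd s cs (a + m)) (fun _ _ => 0) (cs (a + m)) = _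
    rw [ih]
    rfl

lemma exists_p_one_of_pSum_one {x : AMoDState N V} (hx : FeasState t x) (k : V)
    (h1 : pSum t x k = 1) : ∃ i T, T ≤ Tmax t i ∧ x.p k i T = 1 := by
  have h1' : (∑ i : N, ∑ T ∈ Finset.range (Tmax t i + 1), x.p k i T) ≠ 0 := by
    show pSum t x k ≠ 0
    omega
  obtain ⟨i, -, hi⟩ := Finset.exists_ne_zero_of_sum_ne_zero h1'
  obtain ⟨T, hTmem, hT⟩ := Finset.exists_ne_zero_of_sum_ne_zero hi
  have hTle : T ≤ Tmax t i := by
    have := Finset.mem_range.mp hTmem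
    omega
  refine ⟨i, T, hTle, ?_⟩
  rcases hx.isState.p_bin k i T hTle with h | h
  · exact absurd h hT
  · exact h

/-- core construction: serve a waiting customer starting from an available vehicle -/
lemma serve_core (hcard : 2 ≤ Fintype.card N) (ht : ∀ i j : N, i ≠ j → 1 ≤ t i j)
    (hαc : 0 < αc) (hαd : 0 < αd) (hrange : αd * (tmax t : ℝ) ≤ 1)
    {s' : AugState N V} (hs' : FeasAugState t αd s') {k0 : V} {iA iS jS : N}
    (hav : Avail s'.x k0 iA) (hne : iS ≠ jS) (hd : 1 ≤ s'.x.d iS jS) :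
    ∃ (cs : ℕ → AMoDControl N V) (τ0 σW : ℕ),
      τ0 + 1 ≤ 2 * (⌈αd / αc * (tmax t : ℝ)⌉).toNat + tmax t + 1 ∧
      (∀ σ, FeasAugControl t αd (planStates t αc αd s' cs σ) (fun _ _ => 0) (cs σ)) ∧
      (∀ σ, FeasAugState t αd (planStates t αc αd s' cs σ)) ∧
      (∀ σ, σ ≤ τ0 → ∀ i j, (planStates t αc αd s' cs σ).x.d i j = s'.x.d i j) ∧
      (∀ σ, τ0 < σ → ∀ i j, (planStates t αc αd s' cs σ).x.d i j
          = s'.x.d i j - if i = iS ∧ j = jS then 1 else 0) ∧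
      (∀ σ, σ ≠ σW → Ju t (cs σ) = 0) ∧ Ju t (cs σW) ≤ (tmax t : ℤ) := by
  set k1 := (⌈αd / αc * (tmax t : ℝ)⌉).toNat with hk1def
  have htmax : 1 ≤ tmax t := tmax_pos hcard ht
  have htmaxc : (1:ℝ) ≤ (tmax t : ℝ) := by exact_mod_cast htmax
  have hk1 : 1 ≤ k1 := by
    have h1 : (0:ℝ) < αd / αc * (tmax t : ℝ) := by positivity
    have h2 : (0:ℤ) < ⌈αd / αc * (tmax t : ℝ)⌉ := Int.ceil_pos.mpr h1
    omega
  have hk1c : αd * (tmax t : ℝ) ≤ (k1 : ℝ) * αc := by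
    have h1 : αd / αc * (tmax t : ℝ) ≤ ((⌈αd / αc * (tmax t : ℝ)⌉ : ℤ) : ℝ) := Int.le_ceil _
    have h2 : ((⌈αd / αc * (tmax t : ℝ)⌉ : ℤ) : ℝ) = (k1 : ℝ) := by
      have h3 : (k1 : ℤ) = ⌈αd / αc * (tmax t : ℝ)⌉ := by
        rw [hk1def]
        exact Int.toNat_of_nonneg (Int.ceil_nonneg (by positivity))
      exact_mod_cast congrArg (fun z : ℤ => (z : ℝ)) h3.symm
    rw [h2] at h1
    calc αd * (tmax t : ℝ) = (αd / αc * (tmax t : ℝ)) * αc := by field_simp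
      _ ≤ (k1 : ℝ) * αc := mul_le_mul_of_nonneg_right h1 (le_of_lt hαc)
  -- charging bound (from any nonnegative initial charge)
  have hcharge : ∀ q0 : ℝ, 0 ≤ q0 → αd * (tmax t : ℝ) ≤ min (q0 + (k1:ℝ) * αc) 1 := by
    intro q0 hq0
    exact le_min (by linarith) hrange
  have hiter := fun {X : AugState N V} (hX : FeasAugState t αd X) (m : ℕ) =>
    idleStep_iter_feas_d hcard ht hαc.le hαd hrange (s := X) hX m
  by_cases hAS : iA = iS
  · -- already at the right station
    subst hAS
    set cs : ℕ → AMoDControl N V :=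
      fun σ => if σ = k1 then ctrlV k0 iA jS else zeroCtrl N V with hcs
    have hcs_zero : ∀ σ, σ ≠ k1 → cs σ = zeroCtrl N V := by
      intro σ hσ
      rw [hcs]
      exact if_neg hσ
    have hcs_k1 : cs k1 = ctrlV k0 iA jS := by rw [hcs]; exact if_pos rfl
    have hPle : ∀ σ, σ ≤ k1 → planStates t αc αd s' cs σ = (idleStep t αc αd)^[σ] s' := by
      intro σ hσ
      have h1 := planStates_zero_seg (t := t) (αc := αc) (αd := αd) (s := s') (cs := cs)
        (τ := 0) (m := σ) (fun r hr => hcs_zero (0 + r) (by omega))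
      simpa [planStates] using h1
    have hF1 : ∀ σ, σ ≤ k1 → FeasAugState t αd (planStates t αc αd s' cs σ)
        ∧ ∀ i j, (planStates t αc αd s' cs σ).x.d i j = s'.x.d i j := by
      intro σ hσ
      rw [hPle σ hσ]
      exact hiter hs' σ
    have hk1state := hPle k1 (le_refl k1)
    obtain ⟨hu1, hq1⟩ := idle_charge hcard ht hαc.le hαd hrange hs' hav k1 hk1
    have hq2 : αd * (tmax t : ℝ) ≤ (planStates t αc αd s' cs k1).q k0 := by
      rw [hk1state]
      exact le_trans (hcharge _ (hs'.q_nonneg k0)) hq1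
    have hFk1 : FeasAugState t αd (planStates t αc αd s' cs k1) := (hF1 k1 (le_refl k1)).1
    have huk1 : (planStates t αc αd s' cs k1).x.u k0 iA = 1 := by rw [hk1state]; exact hu1
    have htS : t iA jS ≤ tmax t := t_le_tmax hne
    have hVfeas : FeasAugControl t αd (planStates t αc αd s' cs k1) (fun _ _ => 0)
        (ctrlV k0 iA jS) := by
      apply ctrlV_feas hFk1 _ hne
      · rw [(hF1 k1 (le_refl k1)).2 iA jS]
        exact hd
      · refine le_trans ?_ hq2
        apply mul_le_mul_of_nonneg_left _ hαd.le
        exact_mod_cast htS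
      · unfold Avail
        have := p_nonneg hFk1.feasState.isState k0 iA 0
        omega
    have hstep : planStates t αc αd s' cs (k1 + 1)
        = augSucc t αc αd (planStates t αc αd s' cs k1) (fun _ _ => 0) (ctrlV k0 iA jS) := by
      show augSucc t αc αd _ (fun _ _ => 0) (cs k1) = _
      rw [hcs_k1]
    have hFk2 : FeasAugState t αd (planStates t αc αd s' cs (k1 + 1)) := by
      rw [hstep]
      exact feas_succ hcard ht hαc.le hαd hrange hFk1 hVfeas
    have hdk2 : ∀ i j, (planStates t αc αd s' cs (k1 + 1)).x.d i j
        = s'.x.d i j - if i = iA ∧ j = jS then 1 else 0 := by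
      intro i j
      rw [hstep, ctrlV_succ_d, (hF1 k1 (le_refl k1)).2 i j]
    have hPtail : ∀ σ, k1 < σ → planStates t αc αd s' cs σ
        = (idleStep t αc αd)^[σ - (k1+1)] (planStates t αc αd s' cs (k1+1)) := by
      intro σ hσ
      have h1 := planStates_zero_seg (t := t) (αc := αc) (αd := αd) (s := s') (cs := cs)
        (τ := k1 + 1) (m := σ - (k1+1)) (fun r hr => hcs_zero (k1 + 1 + r) (by omega))
      rw [show k1 + 1 + (σ - (k1+1)) = σ from by omega] at h1
      exact h1
    have hFtail : ∀ σ, k1 < σ → FeasAugState t αd (planStates t αc αd s' cs σ)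
        ∧ ∀ i j, (planStates t αc αd s' cs σ).x.d i j
          = s'.x.d i j - if i = iA ∧ j = jS then 1 else 0 := by
      intro σ hσ
      rw [hPtail σ hσ]
      obtain ⟨hA, hB⟩ := hiter hFk2 (σ - (k1+1))
      exact ⟨hA, fun i j => (hB i j).trans (hdk2 i j)⟩
    refine ⟨cs, k1, k1, by omega, ?_, ?_, ?_, ?_, ?_, ?_⟩
    · intro σ
      by_cases hσ : σ = k1
      · subst hσ
        rw [hcs_k1]
        exact hVfeas
      · rw [hcs_zero σ hσ]
        apply zeroCtrl_feas
        rcases le_or_gt σ k1 with h | h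
        · exact (hF1 σ h).1
        · exact (hFtail σ h).1
    · intro σ
      rcases le_or_gt σ k1 with h | h
      · exact (hF1 σ h).1
      · exact (hFtail σ h).1
    · intro σ hσ
      exact (hF1 σ hσ).2
    · intro σ hσ
      exact (hFtail σ hσ).2
    · intro σ hσ
      rw [hcs_zero σ hσ]
      exact Ju_zeroCtrl
    · rw [hcs_k1, Ju_ctrlV]
      exact_mod_cast Nat.zero_le _
  · -- need to rebalance first
    have htAS : 1 ≤ t iA iS := ht iA iS hAS
    have htASm : t iA iS ≤ tmax t := t_le_tmax hAS
    set e := k1 + t iA iS with he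
    set τ0 := e + k1 with hτ0
    set cs : ℕ → AMoDControl N V :=
      fun σ => if σ = k1 then ctrlW k0 iA iS
        else if σ = τ0 then ctrlV k0 iS jS else zeroCtrl N V with hcs
    have hcs_zero : ∀ σ, σ ≠ k1 → σ ≠ τ0 → cs σ = zeroCtrl N V := by
      intro σ h1 h2
      rw [hcs]
      show (if σ = k1 then _ else if σ = τ0 then _ else _) = _
      rw [if_neg h1, if_neg h2]
    have hcs_k1 : cs k1 = ctrlW k0 iA iS := by
      rw [hcs]
      show (if k1 = k1 then _ else _) = _
      rw [if_pos rfl]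
    have hcs_τ0 : cs τ0 = ctrlV k0 iS jS := by
      rw [hcs]
      show (if τ0 = k1 then _ else if τ0 = τ0 then _ else _) = _
      rw [if_neg (by omega), if_pos rfl]
    -- phase 1 : [0, k1]
    have hPle : ∀ σ, σ ≤ k1 → planStates t αc αd s' cs σ = (idleStep t αc αd)^[σ] s' := by
      intro σ hσ
      have h1 := planStates_zero_seg (t := t) (αc := αc) (αd := αd) (s := s') (cs := cs)
        (τ := 0) (m := σ) (fun r hr => hcs_zero (0 + r) (by omega) (by omega))
      simpa [planStates] using h1
    have hF1 : ∀ σ, σ ≤ k1 → FeasAugState t αd (planStates t αc αd s' cs σ)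
        ∧ ∀ i j, (planStates t αc αd s' cs σ).x.d i j = s'.x.d i j := by
      intro σ hσ
      rw [hPle σ hσ]
      exact hiter hs' σ
    obtain ⟨hu1, hq1⟩ := idle_charge hcard ht hαc.le hαd hrange hs' hav k1 hk1
    have hFk1 : FeasAugState t αd (planStates t αc αd s' cs k1) := (hF1 k1 (le_refl k1)).1
    have hq2 : αd * (tmax t : ℝ) ≤ (planStates t αc αd s' cs k1).q k0 := by
      rw [hPle k1 (le_refl k1)]
      exact le_trans (hcharge _ (hs'.q_nonneg k0)) hq1
    have huk1 : (planStates t αc αd s' cs k1).x.u k0 iA = 1 := by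
      rw [hPle k1 (le_refl k1)]; exact hu1
    -- the rebalancing control
    have hWfeas : FeasAugControl t αd (planStates t αc αd s' cs k1) (fun _ _ => 0)
        (ctrlW k0 iA iS) := by
      apply ctrlW_feas hFk1 _ hAS
      · refine le_trans ?_ hq2
        apply mul_le_mul_of_nonneg_left _ hαd.le
        exact_mod_cast htASm
      · unfold Avail
        have := p_nonneg hFk1.feasState.isState k0 iA 0
        omega
    have hstepW : planStates t αc αd s' cs (k1 + 1)
        = augSucc t αc αd (planStates t αc αd s' cs k1) (fun _ _ => 0) (ctrlW k0 iA iS) := by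
      show augSucc t αc αd _ (fun _ _ => 0) (cs k1) = _
      rw [hcs_k1]
    have hFk2 : FeasAugState t αd (planStates t αc αd s' cs (k1 + 1)) := by
      rw [hstepW]
      exact feas_succ hcard ht hαc.le hαd hrange hFk1 hWfeas
    have hdk2 : ∀ i j, (planStates t αc αd s' cs (k1 + 1)).x.d i j = s'.x.d i j := by
      intro i j
      rw [hstepW, ctrlW_succ_d, (hF1 k1 (le_refl k1)).2 i j]
    have hpk2 : (planStates t αc αd s' cs (k1 + 1)).x.p k0 iS (t iA iS - 1) = 1 := by
      rw [hstepW]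
      exact ctrlW_succ_p hcard ht hFk1 huk1 hAS
    -- phase 2 : transit [k1+1, e]
    have hPmid : ∀ σ, k1 < σ → σ ≤ e → planStates t αc αd s' cs σ
        = (idleStep t αc αd)^[σ - (k1+1)] (planStates t αc αd s' cs (k1+1)) := by
      intro σ h1 h2
      have h3 := planStates_zero_seg (t := t) (αc := αc) (αd := αd) (s := s') (cs := cs)
        (τ := k1 + 1) (m := σ - (k1+1)) (fun r hr => hcs_zero (k1 + 1 + r) (by omega) (by omega))
      rw [show k1 + 1 + (σ - (k1+1)) = σ from by omega] at h3
      exact h3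
    have hF2 : ∀ σ, k1 < σ → σ ≤ e → FeasAugState t αd (planStates t αc αd s' cs σ)
        ∧ ∀ i j, (planStates t αc αd s' cs σ).x.d i j = s'.x.d i j := by
      intro σ h1 h2
      rw [hPmid σ h1 h2]
      obtain ⟨hA, hB⟩ := hiter hFk2 (σ - (k1+1))
      exact ⟨hA, fun i j => (hB i j).trans (hdk2 i j)⟩
    have hpe : (planStates t αc αd s' cs e).x.p k0 iS 0 = 1 := by
      rw [hPmid e (by omega) (le_refl e),
        show e - (k1 + 1) = t iA iS - 1 from by omega]
      exact idle_transit hcard ht hαc.le hαd hrange (t iA iS - 1) _ hFk2 hpk2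
    have hFe : FeasAugState t αd (planStates t αc αd s' cs e) := (hF2 e (by omega) (le_refl e)).1
    have have2 : Avail (planStates t αc αd s' cs e).x k0 iS := by
      unfold Avail
      have := u_nonneg hFe.feasState.isState k0 iS
      omega
    -- phase 3 : recharge [e, τ0]
    have hPmid2 : ∀ σ, e ≤ σ → σ ≤ τ0 → planStates t αc αd s' cs σ
        = (idleStep t αc αd)^[σ - e] (planStates t αc αd s' cs e) := by
      intro σ h1 h2
      have h3 := planStates_zero_seg (t := t) (αc := αc) (αd := αd) (s := s') (cs := cs)
        (τ := e) (m := σ - e) (fun r hr => hcs_zero (e + r) (by omega) (by omega))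
      rw [show e + (σ - e) = σ from by omega] at h3
      exact h3
    have hF3 : ∀ σ, e ≤ σ → σ ≤ τ0 → FeasAugState t αd (planStates t αc αd s' cs σ)
        ∧ ∀ i j, (planStates t αc αd s' cs σ).x.d i j = s'.x.d i j := by
      intro σ h1 h2
      rw [hPmid2 σ h1 h2]
      obtain ⟨hA, hB⟩ := hiter hFe (σ - e)
      exact ⟨hA, fun i j => (hB i j).trans ((hF2 e (by omega) (le_refl e)).2 i j)⟩
    obtain ⟨hu3, hq3⟩ := idle_charge hcard ht hαc.le hαd hrange hFe have2 k1 hk1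
    have hFτ0 : FeasAugState t αd (planStates t αc αd s' cs τ0) := (hF3 τ0 (by omega) (le_refl τ0)).1
    have huτ0 : (planStates t αc αd s' cs τ0).x.u k0 iS = 1 := by
      rw [hPmid2 τ0 (by omega) (le_refl τ0), show τ0 - e = k1 from by omega]
      exact hu3
    have hqτ0 : αd * (tmax t : ℝ) ≤ (planStates t αc αd s' cs τ0).q k0 := by
      rw [hPmid2 τ0 (by omega) (le_refl τ0), show τ0 - e = k1 from by omega]
      exact le_trans (hcharge _ (hFe.q_nonneg k0)) hq3
    have htS : t iS jS ≤ tmax t := t_le_tmax hne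
    have hVfeas : FeasAugControl t αd (planStates t αc αd s' cs τ0) (fun _ _ => 0)
        (ctrlV k0 iS jS) := by
      apply ctrlV_feas hFτ0 _ hne
      · rw [(hF3 τ0 (by omega) (le_refl τ0)).2 iS jS]
        exact hd
      · refine le_trans ?_ hqτ0
        apply mul_le_mul_of_nonneg_left _ hαd.le
        exact_mod_cast htS
      · unfold Avail
        have := p_nonneg hFτ0.feasState.isState k0 iS 0
        omega
    have hstepV : planStates t αc αd s' cs (τ0 + 1)
        = augSucc t αc αd (planStates t αc αd s' cs τ0) (fun _ _ => 0) (ctrlV k0 iS jS) := by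
      show augSucc t αc αd _ (fun _ _ => 0) (cs τ0) = _
      rw [hcs_τ0]
    have hFτ1 : FeasAugState t αd (planStates t αc αd s' cs (τ0 + 1)) := by
      rw [hstepV]
      exact feas_succ hcard ht hαc.le hαd hrange hFτ0 hVfeas
    have hdτ1 : ∀ i j, (planStates t αc αd s' cs (τ0 + 1)).x.d i j
        = s'.x.d i j - if i = iS ∧ j = jS then 1 else 0 := by
      intro i j
      rw [hstepV, ctrlV_succ_d, (hF3 τ0 (by omega) (le_refl τ0)).2 i j]
    have hPtail : ∀ σ, τ0 < σ → planStates t αc αd s' cs σ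
        = (idleStep t αc αd)^[σ - (τ0+1)] (planStates t αc αd s' cs (τ0+1)) := by
      intro σ hσ
      have h1 := planStates_zero_seg (t := t) (αc := αc) (αd := αd) (s := s') (cs := cs)
        (τ := τ0 + 1) (m := σ - (τ0+1)) (fun r hr => hcs_zero (τ0 + 1 + r) (by omega) (by omega))
      rw [show τ0 + 1 + (σ - (τ0+1)) = σ from by omega] at h1
      exact h1
    have hFtail : ∀ σ, τ0 < σ → FeasAugState t αd (planStates t αc αd s' cs σ)
        ∧ ∀ i j, (planStates t αc αd s' cs σ).x.d i j
          = s'.x.d i j - if i = iS ∧ j = jS then 1 else 0 := by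
      intro σ hσ
      rw [hPtail σ hσ]
      obtain ⟨hA, hB⟩ := hiter hFτ1 (σ - (τ0+1))
      exact ⟨hA, fun i j => (hB i j).trans (hdτ1 i j)⟩
    have hFall : ∀ σ, FeasAugState t αd (planStates t αc αd s' cs σ) := by
      intro σ
      rcases le_or_gt σ k1 with h | h
      · exact (hF1 σ h).1
      · rcases le_or_gt σ e with h2 | h2
        · exact (hF2 σ h h2).1
        · rcases le_or_gt σ τ0 with h3 | h3
          · exact (hF3 σ (by omega) h3).1
          · exact (hFtail σ h3).1
    refine ⟨cs, τ0, k1, by omega, ?_, hFall, ?_, ?_, ?_, ?_⟩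
    · intro σ
      by_cases h1 : σ = k1
      · subst h1
        rw [hcs_k1]
        exact hWfeas
      · by_cases h2 : σ = τ0
        · subst h2
          rw [hcs_τ0]
          exact hVfeas
        · rw [hcs_zero σ h1 h2]
          exact zeroCtrl_feas (hFall σ)
    · intro σ hσ
      rcases le_or_gt σ k1 with h | h
      · exact (hF1 σ h).2
      · rcases le_or_gt σ e with h2 | h2
        · exact (hF2 σ h h2).2
        · exact (hF3 σ (by omega) hσ).2
    · intro σ hσ
      exact (hFtail σ hσ).2
    · intro σ hσ
      by_cases h2 : σ = τ0
      · subst h2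
        rw [hcs_τ0]
        exact Ju_ctrlV k0 iS jS
      · rw [hcs_zero σ hσ h2]
        exact Ju_zeroCtrl
    · rw [hcs_k1, Ju_ctrlW]
      exact_mod_cast htASm

lemma Jx_congr {x y : AMoDState N V} (h : ∀ i j, x.d i j = y.d i j) : Jx x = Jx y := by
  unfold Jx
  exact Finset.sum_congr rfl fun i _ => Finset.sum_congr rfl fun j _ => h i j

lemma sum_ite_pair (iS jS : N) :
    (∑ i : N, ∑ j : N, if i = iS ∧ j = jS then (1:ℤ) else 0) = 1 := by
  rw [Finset.sum_eq_single_of_mem iS (Finset.mem_univ iS)]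
  · rw [Finset.sum_eq_single_of_mem jS (Finset.mem_univ jS)]
    · rw [if_pos ⟨rfl, rfl⟩]
    · intro b _ hb
      rw [if_neg (by tauto)]
  · intro b _ hb
    apply Finset.sum_eq_zero
    intro j _
    rw [if_neg (by tauto)]

lemma Jx_drop {x y : AMoDState N V} {iS jS : N}
    (h : ∀ i j, x.d i j = y.d i j - if i = iS ∧ j = jS then 1 else 0) :
    Jx x = Jx y - 1 := by
  unfold Jx
  have h1 : ∀ i : N, ∑ j : N, x.d i j
      = ∑ j : N, (y.d i j - if i = iS ∧ j = jS then 1 else 0) :=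
    fun i => Finset.sum_congr rfl fun j _ => h i j
  rw [Finset.sum_congr rfl fun i _ => h1 i]
  have h2 : ∀ i : N, ∑ j : N, (y.d i j - if i = iS ∧ j = jS then (1:ℤ) else 0)
      = (∑ j : N, y.d i j) - ∑ j : N, (if i = iS ∧ j = jS then (1:ℤ) else 0) :=
    fun i => Finset.sum_sub_distrib _ _
  rw [Finset.sum_congr rfl fun i _ => h2 i, Finset.sum_sub_distrib, sum_ite_pair]

theorem exists_serving_plan (hcard : 2 ≤ Fintype.card N) (ht : ∀ i j : N, i ≠ j → 1 ≤ t i j)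
    (hαc : 0 < αc) (hαd : 0 < αd) (hrange : αd * (tmax t : ℝ) ≤ 1)
    {thor : ℕ} (hthor : 2 * tmax t + 2 * (⌈αd / αc * (tmax t : ℝ)⌉).toNat ≤ thor)
    {s : AugState N V} (hs : FeasAugState t αd s) (k0 : V) {iS jS : N}
    (hne : iS ≠ jS) (hd : 1 ≤ s.x.d iS jS) :
    ∃ (ss : ℕ → AugState N V) (cs : ℕ → AMoDControl N V) (τ0 : ℕ),
      τ0 + 1 ≤ thor ∧ FeasAugTraj t αc αd s thor ss cs ∧
      (∀ σ, FeasAugState t αd (ss σ)) ∧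
      (∀ σ, σ ≤ τ0 → Jx (ss σ).x = Jx s.x) ∧
      (∀ σ, τ0 < σ → Jx (ss σ).x = Jx s.x - 1) ∧
      (∑ σ ∈ Finset.range thor, Ju t (cs σ)) ≤ (tmax t : ℤ) := by
  have htmax : 1 ≤ tmax t := tmax_pos hcard ht
  have hiter := fun {X : AugState N V} (hX : FeasAugState t αd X) (m : ℕ) =>
    idleStep_iter_feas_d hcard ht hαc.le hαd hrange (s := X) hX m
  -- positioning phase
  obtain ⟨a, iA, haS, hF', hAv, hdpres⟩ : ∃ a iA, a + 1 ≤ tmax t ∧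
      FeasAugState t αd ((idleStep t αc αd)^[a] s) ∧
      Avail ((idleStep t αc αd)^[a] s).x k0 iA ∧
      ∀ i j, ((idleStep t αc αd)^[a] s).x.d i j = s.x.d i j := by
    by_cases hA : ∃ i, s.x.u k0 i = 1
    · obtain ⟨iA, hiA⟩ := hA
      refine ⟨0, iA, by omega, hs, ?_, fun i j => rfl⟩
      unfold Avail
      simp only [Function.iterate_zero_apply]
      have := p_nonneg hs.feasState.isState k0 iA 0
      omega
    · have hu0 : ∀ i, s.x.u k0 i = 0 := by
        intro i
        rcases hs.feasState.isState.u_bin k0 i with h | h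
        · exact h
        · exact absurd ⟨i, h⟩ hA
      have hsum0 : (∑ i : N, s.x.u k0 i) = 0 := Finset.sum_eq_zero fun i _ => hu0 i
      have hPS1 : pSum t s.x k0 = 1 := by
        have := hs.feasState.constrUP k0
        omega
      obtain ⟨iA, T, hT, hp1⟩ := exists_p_one_of_pSum_one hs.feasState k0 hPS1
      have hTb : T + 1 ≤ tmax t := by
        have := Tmax_succ_le_tmax hcard ht iA
        omega
      refine ⟨T, iA, hTb, (hiter hs T).1, ?_, (hiter hs T).2⟩
      have hp0 : ((idleStep t αc αd)^[T] s).x.p k0 iA 0 = 1 :=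
        idle_transit hcard ht hαc.le hαd hrange T s hs hp1
      unfold Avail
      have := u_nonneg (hiter hs T).1.feasState.isState k0 iA
      omega
  set s' := (idleStep t αc αd)^[a] s with hs'def
  have hd' : 1 ≤ s'.x.d iS jS := by
    rw [hdpres iS jS]
    exact hd
  obtain ⟨csC, τ0C, σW, hτb, hCfeas, hCstates, hCd1, hCd2, hJu0, hJuW⟩ :=
    serve_core hcard ht hαc hαd hrange hF' hAv hne hd'
  -- the full plan
  set csF : ℕ → AMoDControl N V :=
    fun σ => if σ < a then zeroCtrl N V else csC (σ - a) with hcsF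
  have hcsF_lt : ∀ σ, σ < a → csF σ = zeroCtrl N V := by
    intro σ h
    rw [hcsF]
    exact if_pos h
  have hcsF_ge : ∀ σ, a ≤ σ → csF σ = csC (σ - a) := by
    intro σ h
    rw [hcsF]
    exact if_neg (by omega)
  have hP0 : planStates t αc αd s csF a = s' := by
    have h1 := planStates_zero_seg (t := t) (αc := αc) (αd := αd) (s := s) (cs := csF)
      (τ := 0) (m := a) (fun r hr => hcsF_lt (0 + r) (by omega))
    simpa [planStates] using h1
  have hPcomp : ∀ m, planStates t αc αd s csF (a + m) = planStates t αc αd s' csC m := by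
    intro m
    rw [planStates_append a m, hP0]
    congr 1
    funext r
    rw [hcsF_ge (a + r) (by omega), show a + r - a = r from by omega]
  have hPlow : ∀ σ, σ ≤ a → planStates t αc αd s csF σ = (idleStep t αc αd)^[σ] s := by
    intro σ hσ
    have h1 := planStates_zero_seg (t := t) (αc := αc) (αd := αd) (s := s) (cs := csF)
      (τ := 0) (m := σ) (fun r hr => hcsF_lt (0 + r) (by omega))
    simpa [planStates] using h1
  have hFall : ∀ σ, FeasAugState t αd (planStates t αc αd s csF σ) := by
    intro σ
    rcases le_or_gt σ a with h | h
    · rw [hPlow σ h]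
      exact (hiter hs σ).1
    · rw [show σ = a + (σ - a) from by omega, hPcomp (σ - a)]
      exact hCstates (σ - a)
  refine ⟨planStates t αc αd s csF, csF, a + τ0C, by omega, ⟨rfl, ?_⟩, hFall, ?_, ?_, ?_⟩
  · intro τ hτ
    refine ⟨?_, rfl⟩
    rcases lt_or_ge τ a with h | h
    · rw [hcsF_lt τ h]
      exact zeroCtrl_feas (hFall τ)
    · have hspec := hCfeas (τ - a)
      rw [← hPcomp (τ - a), show a + (τ - a) = τ from by omega] at hspec
      rw [hcsF_ge τ h]
      exact hspec
  · intro σ hσ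
    rcases le_or_gt σ a with h | h
    · rw [hPlow σ h]
      exact Jx_congr ((hiter hs σ).2)
    · rw [show σ = a + (σ - a) from by omega, hPcomp (σ - a)]
      have h1 := hCd1 (σ - a) (by omega)
      exact Jx_congr (fun i j => (h1 i j).trans (hdpres i j))
  · intro σ hσ
    rw [show σ = a + (σ - a) from by omega, hPcomp (σ - a)]
    have h1 := hCd2 (σ - a) (by omega)
    have h2 : ∀ i j, (planStates t αc αd s' csC (σ - a)).x.d i j
        = s.x.d i j - if i = iS ∧ j = jS then 1 else 0 := by
      intro i j
      rw [h1 i j, hdpres i j]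
    exact Jx_drop h2
  · have hbound : ∀ σ, Ju t (csF σ) ≤ (if σ = a + σW then (tmax t : ℤ) else 0) := by
      intro σ
      rcases lt_or_ge σ a with h | h
      · rw [hcsF_lt σ h, Ju_zeroCtrl, if_neg (by omega)]
      · rw [hcsF_ge σ h]
        by_cases h2 : σ - a = σW
        · rw [h2, if_pos (by omega)]
          exact hJuW
        · rw [hJu0 (σ - a) h2, if_neg (by omega)]
    calc (∑ σ ∈ Finset.range thor, Ju t (csF σ))
        ≤ ∑ σ ∈ Finset.range thor, (if σ = a + σW then (tmax t : ℤ) else 0) :=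
          Finset.sum_le_sum fun σ _ => hbound σ
      _ ≤ (tmax t : ℤ) := by
          rw [Finset.sum_ite_eq' (Finset.range thor) (a + σW) (fun _ => (tmax t : ℤ))]
          split_ifs
          · exact le_refl _
          · exact_mod_cast Nat.zero_le _

end TrajLevel

set_option linter.unusedSectionVars false
set_option linter.unusedVariables false
set_option maxHeartbeats 1000000

variable {N V : Type} [Fintype N] [DecidableEq N] [Fintype V]

section CostLemmas

variable {t : N → N → ℕ} {αc αd : ℝ}

lemma feas_along_traj (hcard : 2 ≤ Fintype.card N) (ht : ∀ i j : N, i ≠ j → 1 ≤ t i j)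
    (hαc : 0 ≤ αc) (hαd : 0 < αd) (hrange : αd * (tmax t : ℝ) ≤ 1)
    {s : AugState N V} {n : ℕ} {ys : ℕ → AugState N V} {ds : ℕ → AMoDControl N V}
    (htr : FeasAugTraj t αc αd s n ys ds) (hs : FeasAugState t αd s) :
    ∀ m, m ≤ n → FeasAugState t αd (ys m) := by
  intro m
  induction m with
  | zero => intro _; rw [htr.1]; exact hs
  | succ m ih =>
    intro hm
    rw [(htr.2 m (by omega)).2]
    exact feas_succ hcard ht hαc hαd hrange (ih (by omega)) (htr.2 m (by omega)).1

lemma Jx_nonneg {x : AMoDState N V} (hx : IsState t x) : 0 ≤ Jx x :=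
  Finset.sum_nonneg fun i _ => Finset.sum_nonneg fun j _ => hx.d_nonneg i j

lemma Jx_succ_eq {x : AMoDState N V} {uc : AMoDControl N V} :
    Jx (succState t x (fun _ _ => 0) uc)
      = Jx x - ∑ i : N, ∑ j : N, ∑ k : V, uc.v k i j := by
  unfold Jx
  rw [← Finset.sum_sub_distrib]
  apply Finset.sum_congr rfl
  intro i _
  rw [← Finset.sum_sub_distrib]
  apply Finset.sum_congr rfl
  intro j _
  show x.d i j + 0 - _ = _
  ring

lemma totalv_nonneg {uc : AMoDControl N V} (hc : IsControl uc) :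
    0 ≤ ∑ i : N, ∑ j : N, ∑ k : V, uc.v k i j := by
  apply Finset.sum_nonneg; intro i _
  apply Finset.sum_nonneg; intro j _
  apply Finset.sum_nonneg; intro k _
  rcases hc.v_bin k i j with h | h <;> omega

lemma Jx_succ_le {s : AugState N V} {uc : AMoDControl N V} {c : N → N → ℤ}
    (hc : IsControl uc) (hcz : c = fun _ _ => 0) :
    Jx (augSucc t αc αd s c uc).x ≤ Jx s.x := by
  subst hcz
  rw [augSucc_x, Jx_succ_eq]
  have := totalv_nonneg (V := V) (N := N) hc
  omega

lemma Jx_mono_along {s : AugState N V} {n : ℕ} {ys : ℕ → AugState N V}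
    {ds : ℕ → AMoDControl N V} (htr : FeasAugTraj t αc αd s n ys ds) :
    ∀ m m', m ≤ m' → m' ≤ n → Jx (ys m').x ≤ Jx (ys m).x := by
  intro m m' hmm'
  induction m' with
  | zero =>
    intro _
    have : m = 0 := by omega
    subst this
    exact le_refl _
  | succ m' ih =>
    intro hm'
    rcases Nat.eq_or_lt_of_le hmm' with h | h
    · subst h; exact le_refl _
    · have h1 : Jx (ys (m' + 1)).x ≤ Jx (ys m').x := by
        rw [(htr.2 m' (by omega)).2]
        exact Jx_succ_le (htr.2 m' (by omega)).1.feasControl.isControl rfl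
      exact le_trans h1 (ih (by omega) (by omega))

lemma Qsum_nonneg {s : AugState N V} (hs : FeasAugState t αd s) :
    0 ≤ ∑ k : V, s.q k :=
  Finset.sum_nonneg fun k _ => hs.q_nonneg k

lemma Qsum_le_card {s : AugState N V} (hs : FeasAugState t αd s) :
    ∑ k : V, s.q k ≤ (Fintype.card V : ℝ) := by
  calc ∑ k : V, s.q k ≤ ∑ _k : V, (1:ℝ) := Finset.sum_le_sum fun k _ => hs.q_le_one k
    _ = (Fintype.card V : ℝ) := by simp

/-- lower bound on the cost of any feasible plan -/
lemma cost_lower (hcard : 2 ≤ Fintype.card N) (ht : ∀ i j : N, i ≠ j → 1 ≤ t i j)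
    (hαc : 0 ≤ αc) (hαd : 0 < αd) (hrange : αd * (tmax t : ℝ) ≤ 1)
    {ρ1 ρ2 ρc : ℝ} (hρ1 : 0 ≤ ρ1) (hρ2 : 0 ≤ ρ2) (hρc : 0 ≤ ρc)
    {thor : ℕ} {s : AugState N V} (hs : FeasAugState t αd s)
    {ys : ℕ → AugState N V} {ds : ℕ → AMoDControl N V}
    (htr : FeasAugTraj t αc αd s thor ys ds) :
    (thor : ℝ) * (Jx (ys thor).x : ℝ) - ρ2 * thor * (Fintype.card V : ℝ)
      - ρc * (Fintype.card V : ℝ) ≤ augPlanCost t ρ1 ρ2 ρc thor ys ds := by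
  have hF := feas_along_traj hcard ht hαc hαd hrange htr hs
  have hterm : ∀ τ ∈ Finset.range thor,
      (Jx (ys thor).x : ℝ) - ρ2 * (Fintype.card V : ℝ)
        ≤ (Jx (ys (τ + 1)).x : ℝ) + ρ1 * (Ju t (ds τ) : ℝ) - ρ2 * ∑ k : V, (ys (τ+1)).q k := by
    intro τ hτ
    have hτ' := Finset.mem_range.mp hτ
    have h1 : Jx (ys thor).x ≤ Jx (ys (τ + 1)).x := Jx_mono_along htr (τ+1) thor (by omega) (le_refl _)
    have h2 : (0:ℝ) ≤ ρ1 * (Ju t (ds τ) : ℝ) := by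
      have := Ju_nonneg (t := t) (htr.2 τ hτ').1.feasControl.isControl
      have h3 : (0:ℝ) ≤ (Ju t (ds τ) : ℝ) := by exact_mod_cast this
      positivity
    have h4 : ρ2 * ∑ k : V, (ys (τ+1)).q k ≤ ρ2 * (Fintype.card V : ℝ) :=
      mul_le_mul_of_nonneg_left (Qsum_le_card (hF (τ+1) (by omega))) hρ2
    have h5 : (Jx (ys thor).x : ℝ) ≤ (Jx (ys (τ+1)).x : ℝ) := by exact_mod_cast h1
    linarith
  have hsum : (thor : ℝ) * (Jx (ys thor).x : ℝ) - ρ2 * thor * (Fintype.card V : ℝ)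
      ≤ ∑ τ ∈ Finset.range thor,
        ((Jx (ys (τ + 1)).x : ℝ) + ρ1 * (Ju t (ds τ) : ℝ) - ρ2 * ∑ k : V, (ys (τ+1)).q k) := by
    have h6 := Finset.sum_le_sum hterm
    rw [Finset.sum_const, Finset.card_range] at h6
    have h7 : (thor : ℝ) • ((Jx (ys thor).x : ℝ) - ρ2 * (Fintype.card V : ℝ))
        = (thor : ℝ) * (Jx (ys thor).x : ℝ) - ρ2 * thor * (Fintype.card V : ℝ) := by
      rw [smul_eq_mul]; ring
    rw [nsmul_eq_mul] at h6
    calc (thor : ℝ) * (Jx (ys thor).x : ℝ) - ρ2 * thor * (Fintype.card V : ℝ)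
        = (thor : ℝ) * ((Jx (ys thor).x : ℝ) - ρ2 * (Fintype.card V : ℝ)) := by ring
      _ ≤ _ := h6
  have hterm2 : ρc * ∑ k : V, (ys thor).q k ≤ ρc * (Fintype.card V : ℝ) :=
    mul_le_mul_of_nonneg_left (Qsum_le_card (hF thor (le_refl _))) hρc
  unfold augPlanCost
  linarith

end CostLemmas

section CostLemmas2

variable {t : N → N → ℕ} {αc αd : ℝ}

/-- upper bound on the cost of the serving plan -/
lemma cand_cost (hcard : 2 ≤ Fintype.card N) (ht : ∀ i j : N, i ≠ j → 1 ≤ t i j)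
    (hαc : 0 < αc) (hαd : 0 < αd) (hrange : αd * (tmax t : ℝ) ≤ 1)
    {ρ1 ρ2 ρc : ℝ} (hρ1 : 0 ≤ ρ1) (hρ2 : 0 ≤ ρ2) (hρc : 0 ≤ ρc)
    {thor : ℕ} (hthor : 2 * tmax t + 2 * (⌈αd / αc * (tmax t : ℝ)⌉).toNat ≤ thor)
    {s : AugState N V} (hs : FeasAugState t αd s) (k0 : V) {iS jS : N}
    (hne : iS ≠ jS) (hd : 1 ≤ s.x.d iS jS) :
    ∃ ys ds, FeasAugTraj t αc αd s thor ys ds ∧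
      augPlanCost t ρ1 ρ2 ρc thor ys ds
        ≤ (thor : ℝ) * (Jx s.x : ℝ) - 1 + ρ1 * (tmax t : ℝ) := by
  have htmax := tmax_pos hcard ht
  have hth1 : 1 ≤ thor := by omega
  obtain ⟨ys, ds, τ0, hτ0, htraj, hFeas, hJ1, hJ2, hJu⟩ :=
    exists_serving_plan hcard ht hαc hαd hrange hthor hs k0 hne hd
  refine ⟨ys, ds, htraj, ?_⟩
  -- the Jx sum in ℤ
  have hJxsum : (∑ τ ∈ Finset.range thor, Jx (ys (τ + 1)).x)
      ≤ thor * Jx s.x - 1 := by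
    have hle : ∀ τ ∈ Finset.range (thor - 1), Jx (ys (τ + 1)).x ≤ Jx s.x := by
      intro τ _
      rcases le_or_gt (τ + 1) τ0 with h | h
      · rw [hJ1 (τ+1) h]
      · rw [hJ2 (τ+1) h]; omega
    have hlast : Jx (ys (thor - 1 + 1)).x = Jx s.x - 1 := hJ2 (thor - 1 + 1) (by omega)
    have hsplit : (∑ τ ∈ Finset.range thor, Jx (ys (τ + 1)).x)
        = (∑ τ ∈ Finset.range (thor - 1), Jx (ys (τ + 1)).x) + Jx (ys (thor - 1 + 1)).x := by
      rw [← Finset.sum_range_succ (fun τ => Jx (ys (τ + 1)).x) (thor - 1),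
        show thor - 1 + 1 = thor from by omega]
    rw [hsplit, hlast]
    have h1 : (∑ τ ∈ Finset.range (thor - 1), Jx (ys (τ + 1)).x)
        ≤ (thor - 1 : ℕ) * Jx s.x := by
      calc (∑ τ ∈ Finset.range (thor - 1), Jx (ys (τ + 1)).x)
          ≤ ∑ _τ ∈ Finset.range (thor - 1), Jx s.x := Finset.sum_le_sum hle
        _ = (thor - 1 : ℕ) * Jx s.x := by rw [Finset.sum_const, Finset.card_range]; ring
    have h2 : ((thor - 1 : ℕ) : ℤ) = (thor : ℤ) - 1 := by omega
    rw [h2] at h1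
    have h3 : (thor : ℤ) * Jx s.x = ((thor : ℤ) - 1) * Jx s.x + Jx s.x := by ring
    linarith
  unfold augPlanCost
  have hterms : ∀ τ ∈ Finset.range thor,
      (Jx (ys (τ + 1)).x : ℝ) + ρ1 * (Ju t (ds τ) : ℝ) - ρ2 * ∑ k : V, (ys (τ + 1)).q k
        ≤ (Jx (ys (τ + 1)).x : ℝ) + ρ1 * (Ju t (ds τ) : ℝ) := by
    intro τ _
    have h9 := mul_nonneg hρ2 (Qsum_nonneg (hFeas (τ + 1)))
    linarith
  have hA : (∑ τ ∈ Finset.range thor,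
      ((Jx (ys (τ + 1)).x : ℝ) + ρ1 * (Ju t (ds τ) : ℝ) - ρ2 * ∑ k : V, (ys (τ + 1)).q k))
      ≤ ∑ τ ∈ Finset.range thor, ((Jx (ys (τ + 1)).x : ℝ) + ρ1 * (Ju t (ds τ) : ℝ)) :=
    Finset.sum_le_sum hterms
  have hB : (∑ τ ∈ Finset.range thor, ((Jx (ys (τ + 1)).x : ℝ) + ρ1 * (Ju t (ds τ) : ℝ)))
      = (((∑ τ ∈ Finset.range thor, Jx (ys (τ + 1)).x : ℤ)) : ℝ)
        + ρ1 * (((∑ τ ∈ Finset.range thor, Ju t (ds τ) : ℤ)) : ℝ) := by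
    rw [Finset.sum_add_distrib, ← Finset.mul_sum]
    push_cast
    ring
  have hC : (((∑ τ ∈ Finset.range thor, Jx (ys (τ + 1)).x : ℤ)) : ℝ)
      ≤ (thor : ℝ) * (Jx s.x : ℝ) - 1 := by
    push_cast
    exact_mod_cast hJxsum
  have hD : ρ1 * (((∑ τ ∈ Finset.range thor, Ju t (ds τ) : ℤ)) : ℝ) ≤ ρ1 * (tmax t : ℝ) := by
    apply mul_le_mul_of_nonneg_left _ hρ1
    exact_mod_cast hJu
  have hE : 0 ≤ ρc * ∑ k : V, (ys thor).q k := by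
    have := Qsum_nonneg (hFeas thor)
    positivity
  linarith

/-- the shifted plan -/
lemma shifted_plan (hcard : 2 ≤ Fintype.card N) (ht : ∀ i j : N, i ≠ j → 1 ≤ t i j)
    (hαc : 0 ≤ αc) (hαd : 0 < αd) (hrange : αd * (tmax t : ℝ) ≤ 1)
    {ρ1 ρ2 ρc : ℝ} (hρ1 : 0 ≤ ρ1) (hρ2 : 0 ≤ ρ2) (hρc : 0 ≤ ρc)
    {thor : ℕ} (hth1 : 1 ≤ thor) {s : AugState N V} (hs : FeasAugState t αd s)
    {ys : ℕ → AugState N V} {ds : ℕ → AMoDControl N V}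
    (htr : FeasAugTraj t αc αd s thor ys ds) :
    ∃ ys' ds', FeasAugTraj t αc αd (ys 1) thor ys' ds' ∧
      augPlanCost t ρ1 ρ2 ρc thor ys' ds'
        ≤ augPlanCost t ρ1 ρ2 ρc thor ys ds - (Jx (ys 1).x : ℝ) + (Jx (ys thor).x : ℝ)
          + ρ2 * (Fintype.card V : ℝ) + ρc * (Fintype.card V : ℝ) := by
  classical
  have hF := feas_along_traj hcard ht hαc hαd hrange htr hs
  set ys' : ℕ → AugState N V :=
    fun σ => if σ < thor then ys (σ + 1) else idleStep t αc αd (ys thor) with hys'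
  set ds' : ℕ → AMoDControl N V :=
    fun σ => if σ + 1 < thor then ds (σ + 1) else zeroCtrl N V with hds'
  have hys'lt : ∀ σ, σ < thor → ys' σ = ys (σ + 1) := by
    intro σ h; rw [hys']; exact if_pos h
  have hys'thor : ys' thor = idleStep t αc αd (ys thor) := by
    rw [hys']; exact if_neg (by omega)
  have hds'lt : ∀ σ, σ + 1 < thor → ds' σ = ds (σ + 1) := by
    intro σ h; rw [hds']; exact if_pos h
  have hds'last : ds' (thor - 1) = zeroCtrl N V := by
    rw [hds']; exact if_neg (by omega)
  have htr' : FeasAugTraj t αc αd (ys 1) thor ys' ds' := by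
    constructor
    · rw [hys'lt 0 (by omega)]
    · intro σ hσ
      rcases lt_or_ge (σ + 1) thor with h | h
      · refine ⟨?_, ?_⟩
        · rw [hds'lt σ h, hys'lt σ hσ]
          exact (htr.2 (σ + 1) h).1
        · rw [hds'lt σ h, hys'lt σ hσ, hys'lt (σ + 1) h]
          exact (htr.2 (σ + 1) h).2
      · have hσeq : σ = thor - 1 := by omega
        subst hσeq
        have h1 : ys' (thor - 1) = ys thor := by
          rw [hys'lt (thor - 1) (by omega), show thor - 1 + 1 = thor from by omega]
        refine ⟨?_, ?_⟩
        · rw [hds'last, h1]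
          exact zeroCtrl_feas (hF thor (le_refl _))
        · rw [hds'last, h1, show thor - 1 + 1 = thor from by omega, hys'thor]
          rfl
  refine ⟨ys', ds', htr', ?_⟩
  -- cost comparison
  set G : ℕ → ℝ := fun σ =>
    (Jx (ys (σ + 1)).x : ℝ) + ρ1 * (Ju t (ds σ) : ℝ) - ρ2 * ∑ k : V, (ys (σ + 1)).q k
    with hG
  set F : ℕ → ℝ := fun σ =>
    (Jx (ys' (σ + 1)).x : ℝ) + ρ1 * (Ju t (ds' σ) : ℝ) - ρ2 * ∑ k : V, (ys' (σ + 1)).q k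
    with hFdef
  have hFG : ∀ σ, σ < thor - 1 → F σ = G (σ + 1) := by
    intro σ h
    rw [hFdef, hG]
    show (Jx (ys' (σ + 1)).x : ℝ) + ρ1 * (Ju t (ds' σ) : ℝ) - ρ2 * ∑ k : V, (ys' (σ + 1)).q k
      = _
    rw [hys'lt (σ + 1) (by omega), hds'lt σ (by omega)]
  have hQnew0 : 0 ≤ ∑ k : V, (idleStep t αc αd (ys thor)).q k :=
    Qsum_nonneg (idleStep_feas hcard ht hαc hαd hrange (hF thor (le_refl _)))
  have hFlast : F (thor - 1) ≤ (Jx (ys thor).x : ℝ) := by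
    rw [hFdef]
    show (Jx (ys' (thor - 1 + 1)).x : ℝ) + ρ1 * (Ju t (ds' (thor - 1)) : ℝ)
        - ρ2 * ∑ k : V, (ys' (thor - 1 + 1)).q k ≤ _
    rw [show thor - 1 + 1 = thor from by omega, hys'thor, hds'last, Ju_zeroCtrl]
    have h1 : Jx (idleStep t αc αd (ys thor)).x = Jx (ys thor).x :=
      Jx_congr fun i j => idleStep_d i j
    rw [h1]
    have h2 : 0 ≤ ρ2 * ∑ k : V, (idleStep t αc αd (ys thor)).q k := by positivity
    push_cast
    linarith
  have hsumF : (∑ σ ∈ Finset.range thor, F σ)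
      ≤ (∑ σ ∈ Finset.range thor, G σ) - G 0 + (Jx (ys thor).x : ℝ) := by
    have h1 : (∑ σ ∈ Finset.range thor, F σ)
        = (∑ σ ∈ Finset.range (thor - 1), F σ) + F (thor - 1) := by
      rw [← Finset.sum_range_succ F (thor - 1), show thor - 1 + 1 = thor from by omega]
    have h2 : (∑ σ ∈ Finset.range thor, G σ)
        = (∑ σ ∈ Finset.range (thor - 1), G (σ + 1)) + G 0 := by
      rw [← Finset.sum_range_succ' G (thor - 1), show thor - 1 + 1 = thor from by omega]
    have h3 : (∑ σ ∈ Finset.range (thor - 1), F σ)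
        = ∑ σ ∈ Finset.range (thor - 1), G (σ + 1) :=
      Finset.sum_congr rfl fun σ hσ => hFG σ (Finset.mem_range.mp hσ)
    rw [h1, h3]
    have h4 : (∑ σ ∈ Finset.range (thor - 1), G (σ + 1))
        = (∑ σ ∈ Finset.range thor, G σ) - G 0 := by rw [h2]; ring
    rw [h4]
    linarith [hFlast]
  -- assemble
  have hcost' : augPlanCost t ρ1 ρ2 ρc thor ys' ds'
      = (∑ σ ∈ Finset.range thor, F σ) - ρc * ∑ k : V, (ys' thor).q k := rfl
  have hcost : augPlanCost t ρ1 ρ2 ρc thor ys ds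
      = (∑ σ ∈ Finset.range thor, G σ) - ρc * ∑ k : V, (ys thor).q k := rfl
  have hG0 : G 0 = (Jx (ys 1).x : ℝ) + ρ1 * (Ju t (ds 0) : ℝ) - ρ2 * ∑ k : V, (ys 1).q k :=
    rfl
  have hJu0 : 0 ≤ ρ1 * (Ju t (ds 0) : ℝ) := by
    have := Ju_nonneg (t := t) (htr.2 0 (by omega)).1.feasControl.isControl
    have h3 : (0:ℝ) ≤ (Ju t (ds 0) : ℝ) := by exact_mod_cast this
    positivity
  have hQ1 : ρ2 * ∑ k : V, (ys 1).q k ≤ ρ2 * (Fintype.card V : ℝ) :=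
    mul_le_mul_of_nonneg_left (Qsum_le_card (hF 1 (by omega))) hρ2
  have hQT : ρc * ∑ k : V, (ys thor).q k ≤ ρc * (Fintype.card V : ℝ) :=
    mul_le_mul_of_nonneg_left (Qsum_le_card (hF thor (le_refl _))) hρc
  have hQT' : 0 ≤ ρc * ∑ k : V, (ys' thor).q k := by
    rw [hys'thor]
    positivity
  rw [hcost', hcost]
  have hG0le : -(G 0) ≤ -(Jx (ys 1).x : ℝ) + ρ2 * (Fintype.card V : ℝ) := by
    rw [hG0]
    linarith
  linarith [hsumF]

end CostLemmas2

set_option linter.unusedSectionVars false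
set_option linter.unusedVariables false
set_option maxHeartbeats 1000000

variable {N V : Type} [Fintype N] [DecidableEq N] [Fintype V]

lemma eq_on_of_sum_le {α : Type} {s : Finset α} {f g : α → ℤ}
    (hle : ∀ a ∈ s, g a ≤ f a) (hsum : ∑ a ∈ s, f a ≤ ∑ a ∈ s, g a) :
    ∀ a ∈ s, f a = g a := by
  have h1 : ∑ a ∈ s, (f a - g a) = 0 := by
    rw [Finset.sum_sub_distrib]
    have h2 : 0 ≤ ∑ a ∈ s, (f a - g a) := by
      apply Finset.sum_nonneg
      intro a ha
      have := hle a ha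
      omega
    rw [Finset.sum_sub_distrib] at h2
    omega
  have h3 := (Finset.sum_eq_zero_iff_of_nonneg
    (fun a ha => by have := hle a ha; omega : ∀ a ∈ s, 0 ≤ f a - g a)).mp h1
  intro a ha
  have := h3 a ha
  omega

lemma d_eq_entrywise {x y : AMoDState N V}
    (hle : ∀ i j, y.d i j ≤ x.d i j) (hJ : Jx x ≤ Jx y) : ∀ i j, x.d i j = y.d i j := by
  have houter : ∀ i ∈ (Finset.univ : Finset N), (∑ j : N, x.d i j) = ∑ j : N, y.d i j :=
    eq_on_of_sum_le (fun i _ => Finset.sum_le_sum fun j _ => hle i j) hJ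
  intro i j
  exact eq_on_of_sum_le (fun j _ => hle i j)
    (le_of_eq (houter i (Finset.mem_univ i))) j (Finset.mem_univ j)

lemma entry_le_Jx {x : AMoDState N V} (hx : IsState t x) (i j : N) : x.d i j ≤ Jx x := by
  have h1 : x.d i j ≤ ∑ j' : N, x.d i j' :=
    Finset.single_le_sum (fun j' _ => hx.d_nonneg i j') (Finset.mem_univ j)
  exact le_trans h1 (Finset.single_le_sum
    (fun i' _ => Finset.sum_nonneg fun j' _ => hx.d_nonneg i' j') (Finset.mem_univ i))

theorem mpc_charging_solves_ARP' {N V : Type} [Fintype N] [DecidableEq N] [Fintype V]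
    [Nonempty V] (t : N → N → ℕ) (hcard : 2 ≤ Fintype.card N)
    (ht : ∀ i j : N, i ≠ j → 1 ≤ t i j)
    (αc αd : ℝ) (hαc : 0 < αc) (hαd : 0 < αd)
    (hrange : αd * (tmax t : ℝ) ≤ 1)
    (thor : ℕ)
    (hthor : 2 * tmax t + 2 * (⌈αd / αc * (tmax t : ℝ)⌉).toNat ≤ thor) :
    ∃ ρbar : ℝ, 0 < ρbar ∧
      ∀ ρ1 ρ2 ρc : ℝ, 0 ≤ ρ1 → ρ1 < ρbar → 0 ≤ ρ2 → ρ2 < ρbar → 0 ≤ ρc → ρc < ρbar →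
        ∀ (ss : ℕ → AugState N V) (cs : ℕ → AMoDControl N V),
          FeasAugState t αd (ss 0) → AugMPCTraj t αc αd ρ1 ρ2 ρc thor ss cs →
            ∃ T : ℕ, ∀ τ ≥ T, ∀ i j : N, (ss τ).x.d i j = 0 := by
  classical
  have htmax := tmax_pos hcard ht
  have hth1 : 1 ≤ thor := by omega
  set K : ℝ := (thor : ℝ) * (Fintype.card V : ℝ) + (Fintype.card V : ℝ) + (tmax t : ℝ) + 2
    with hKdef
  have hCV0 : (0:ℝ) ≤ (Fintype.card V : ℝ) := Nat.cast_nonneg _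
  have hth0 : (0:ℝ) ≤ (thor : ℝ) := Nat.cast_nonneg _
  have htm0 : (0:ℝ) ≤ (tmax t : ℝ) := Nat.cast_nonneg _
  have hthCV : (0:ℝ) ≤ (thor : ℝ) * (Fintype.card V : ℝ) := by positivity
  have hKpos : 0 < K := by rw [hKdef]; linarith
  have htmK : (tmax t : ℝ) ≤ K := by rw [hKdef]; linarith
  have hCVK : (Fintype.card V : ℝ) ≤ K := by rw [hKdef]; linarith
  have hthCVK : (thor : ℝ) * (Fintype.card V : ℝ) ≤ K := by rw [hKdef]; linarith
  have hmul : ∀ ρ X : ℝ, 0 ≤ ρ → ρ < 1/(4*K) → 0 ≤ X → X ≤ K → ρ * X ≤ 1/4 := by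
    intro ρ X h1 h2 h3 h4
    have e1 : ρ * X ≤ ρ * K := mul_le_mul_of_nonneg_left h4 h1
    have e2 : ρ * K ≤ (1/(4*K)) * K := mul_le_mul_of_nonneg_right h2.le hKpos.le
    have e3 : (1/(4*K)) * K = 1/4 := by field_simp
    exact (e1.trans e2).trans_eq e3
  refine ⟨1/(4*K), by positivity, ?_⟩
  intro ρ1 ρ2 ρc hρ10 hρ1b hρ20 hρ2b hρc0 hρcb ss cs hs0 hMPC
  obtain ⟨hstep, hopt⟩ := hMPC
  choose YS DS hOPT hds0 using hopt
  have hb1 : ρ1 * (tmax t : ℝ) ≤ 1/4 := hmul _ _ hρ10 hρ1b htm0 htmK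
  have hb2 : ρ2 * ((thor : ℝ) * (Fintype.card V : ℝ)) ≤ 1/4 := hmul _ _ hρ20 hρ2b hthCV hthCVK
  have hb3 : ρc * (Fintype.card V : ℝ) ≤ 1/4 := hmul _ _ hρc0 hρcb hCV0 hCVK
  have hb4 : ρ2 * (Fintype.card V : ℝ) ≤ 1/4 := hmul _ _ hρ20 hρ2b hCV0 hCVK
  by_contra hcon
  push_neg at hcon
  -- feasibility along the trajectory
  have hFtraj : ∀ τ, FeasAugState t αd (ss τ) := by
    intro τ
    induction τ with
    | zero => exact hs0
    | succ τ ih =>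
      rw [(hstep τ).2]
      exact feas_succ hcard ht hαc.le hαd hrange ih (hstep τ).1
  have hdstep : ∀ τ i j, (ss (τ+1)).x.d i j ≤ (ss τ).x.d i j := by
    intro τ i j
    rw [(hstep τ).2]
    have h1 : 0 ≤ ∑ k : V, (cs τ).v k i j := by
      apply Finset.sum_nonneg
      intro k _
      rcases (hstep τ).1.feasControl.isControl.v_bin k i j with h | h <;> omega
    show (ss τ).x.d i j + 0 - ∑ k : V, (cs τ).v k i j ≤ _
    omega
  have hJxstep : ∀ τ, Jx (ss (τ+1)).x ≤ Jx (ss τ).x := by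
    intro τ
    rw [(hstep τ).2]
    exact Jx_succ_le (hstep τ).1.feasControl.isControl rfl
  have hJxmono : ∀ τ τ', τ ≤ τ' → Jx (ss τ').x ≤ Jx (ss τ).x := by
    intro τ τ' h
    induction τ' with
    | zero =>
      have : τ = 0 := by omega
      subst this; exact le_refl _
    | succ τ' ih =>
      rcases Nat.eq_or_lt_of_le h with h1 | h1
      · subst h1; exact le_refl _
      · exact le_trans (hJxstep τ') (ih (by omega))
  have hJxnn : ∀ τ, 0 ≤ Jx (ss τ).x := fun τ => Jx_nonneg (hFtraj τ).feasState.isState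
  -- stabilization of Jx
  obtain ⟨T0, hT0⟩ : ∃ T0, ∀ τ, T0 ≤ τ → Jx (ss τ).x = Jx (ss T0).x := by
    set g : ℕ → ℕ := fun τ => (Jx (ss τ).x).toNat with hg
    have hne : (Set.range g).Nonempty := ⟨g 0, 0, rfl⟩
    obtain ⟨T0, hgT0⟩ := Nat.sInf_mem hne
    refine ⟨T0, fun τ hτ => ?_⟩
    have h1 : g τ ≤ g T0 := Int.toNat_le_toNat (hJxmono T0 τ hτ)
    have h2 : g T0 ≤ g τ := by
      rw [hgT0]
      exact Nat.sInf_le ⟨τ, rfl⟩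
    have h3 : g τ = g T0 := by omega
    have h4 : Jx (ss τ).x = ((g τ : ℕ) : ℤ) := (Int.toNat_of_nonneg (hJxnn τ)).symm
    have h5 : Jx (ss T0).x = ((g T0 : ℕ) : ℤ) := (Int.toNat_of_nonneg (hJxnn T0)).symm
    rw [h4, h5, h3]
  -- d is constant after T0
  have hdconst : ∀ τ, T0 ≤ τ → ∀ i j, (ss τ).x.d i j = (ss T0).x.d i j := by
    intro τ hτ
    induction τ with
    | zero =>
      have : T0 = 0 := by omega
      subst this
      intro i j; rfl
    | succ τ ih =>
      rcases Nat.eq_or_lt_of_le hτ with h1 | h1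
      · rw [h1]
        intro i j; rfl
      · have hτ' : T0 ≤ τ := by omega
        have hJeq : Jx (ss τ).x ≤ Jx (ss (τ + 1)).x := by
          rw [hT0 τ hτ', hT0 (τ+1) (by omega)]
        have := d_eq_entrywise (x := (ss τ).x) (y := (ss (τ+1)).x)
          (fun i j => hdstep τ i j) hJeq
        intro i j
        rw [← this i j]
        exact ih hτ' i j
  obtain ⟨τ1, hτ1, iS, jS, hdne⟩ := hcon T0
  have hd1 : 1 ≤ (ss T0).x.d iS jS := by
    have h1 := hdconst τ1 hτ1 iS jS
    have h2 := (hFtraj τ1).feasState.isState.d_nonneg iS jS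
    omega
  have hne : iS ≠ jS := by
    intro h
    subst h
    rw [(hFtraj T0).feasState.isState.d_diag iS] at hd1
    omega
  set J : ℤ := Jx (ss T0).x with hJdef
  have hJ1 : 1 ≤ J := le_trans hd1 (entry_le_Jx (hFtraj T0).feasState.isState iS jS)
  set k0 := Classical.arbitrary V with hk0
  have hdτ : ∀ τ, T0 ≤ τ → 1 ≤ (ss τ).x.d iS jS := by
    intro τ h
    rw [hdconst τ h iS jS]
    exact hd1
  have hJτ : ∀ τ, T0 ≤ τ → Jx (ss τ).x = J := fun τ h => hT0 τ h
  set Vf : ℕ → ℝ := fun τ => augPlanCost t ρ1 ρ2 ρc thor (YS τ) (DS τ) with hVf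
  -- key 1 : the optimal plan always serves a customer
  have hkey1 : ∀ τ, T0 ≤ τ → Jx ((YS τ) thor).x ≤ J - 1 := by
    intro τ hτ
    obtain ⟨htrplan, hmin⟩ := hOPT τ
    obtain ⟨ys, ds, htrc, hcost⟩ := cand_cost hcard ht hαc hαd hrange hρ10 hρ20 hρc0 hthor
      (hFtraj τ) k0 hne (hdτ τ hτ)
    rw [hJτ τ hτ] at hcost
    have hup : Vf τ ≤ (thor : ℝ) * (J : ℝ) - 1 + ρ1 * (tmax t : ℝ) := by
      have := hmin ys ds htrc
      show augPlanCost t ρ1 ρ2 ρc thor (YS τ) (DS τ) ≤ _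
      linarith
    by_contra hcon2
    push_neg at hcon2
    have hJend_le : Jx ((YS τ) thor).x ≤ J := by
      have h5 : (YS τ) 0 = ss τ := htrplan.1
      have h6 := Jx_mono_along htrplan 0 thor (by omega) (le_refl _)
      rw [h5, hJτ τ hτ] at h6
      exact h6
    have hJeq : Jx ((YS τ) thor).x = J := by omega
    have hlow := cost_lower hcard ht hαc.le hαd hrange hρ10 hρ20 hρc0 (hFtraj τ) htrplan
    rw [hJeq] at hlow
    have hVlow' : (thor : ℝ) * (J : ℝ) - ρ2 * thor * (Fintype.card V : ℝ)
        - ρc * (Fintype.card V : ℝ) ≤ Vf τ := hlow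
    have hassoc : ρ2 * (thor : ℝ) * (Fintype.card V : ℝ)
        = ρ2 * ((thor : ℝ) * (Fintype.card V : ℝ)) := by ring
    rw [hassoc] at hVlow'
    linarith
  -- descent of the optimal cost
  have hdesc : ∀ τ, T0 ≤ τ → Vf (τ + 1) ≤ Vf τ - 1/2 := by
    intro τ hτ
    obtain ⟨htrplan, hmin⟩ := hOPT τ
    have hys1 : (YS τ) 1 = ss (τ + 1) := by
      rw [(hstep τ).2, ← hds0 τ, ← htrplan.1]
      exact (htrplan.2 0 (by omega)).2
    obtain ⟨ys', ds', htr', hcost'⟩ := shifted_plan hcard ht hαc.le hαd hrange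
      hρ10 hρ20 hρc0 hth1 (hFtraj τ) htrplan
    rw [hys1] at htr'
    have h1 := (hOPT (τ + 1)).2 ys' ds' htr'
    have h2 : (Jx ((YS τ) 1).x : ℝ) = (J : ℝ) := by
      rw [hys1, hJτ (τ + 1) (by omega)]
    have h3 : (Jx ((YS τ) thor).x : ℝ) ≤ (J : ℝ) - 1 := by
      have := hkey1 τ hτ
      have h4 : ((Jx ((YS τ) thor).x : ℤ) : ℝ) ≤ ((J - 1 : ℤ) : ℝ) := by exact_mod_cast this
      push_cast at h4
      linarith
    show augPlanCost t ρ1 ρ2 ρc thor (YS (τ+1)) (DS (τ+1))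
      ≤ augPlanCost t ρ1 ρ2 ρc thor (YS τ) (DS τ) - 1/2
    linarith
  -- lower bound on the optimal cost
  have hVlow : ∀ τ, -(1:ℝ) ≤ Vf τ := by
    intro τ
    obtain ⟨htrplan, hmin⟩ := hOPT τ
    have hlow := cost_lower hcard ht hαc.le hαd hrange hρ10 hρ20 hρc0 (hFtraj τ) htrplan
    have hFend := feas_along_traj hcard ht hαc.le hαd hrange htrplan (hFtraj τ) thor (le_refl _)
    have hJe : (0:ℝ) ≤ (Jx ((YS τ) thor).x : ℝ) := by
      have := Jx_nonneg hFend.feasState.isState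
      exact_mod_cast this
    have h5 : (0:ℝ) ≤ (thor : ℝ) * (Jx ((YS τ) thor).x : ℝ) := mul_nonneg hth0 hJe
    have hassoc : ρ2 * (thor : ℝ) * (Fintype.card V : ℝ)
        = ρ2 * ((thor : ℝ) * (Fintype.card V : ℝ)) := by ring
    rw [hassoc] at hlow
    show -(1:ℝ) ≤ augPlanCost t ρ1 ρ2 ρc thor (YS τ) (DS τ)
    linarith
  -- telescoping contradiction
  have htel : ∀ n : ℕ, Vf (T0 + n) ≤ Vf T0 - n * (1/2) := by
    intro n
    induction n with
    | zero => simp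
    | succ n ih =>
      have h1 : T0 + (n + 1) = (T0 + n) + 1 := by omega
      rw [h1]
      have h2 := hdesc (T0 + n) (by omega)
      push_cast
      push_cast at ih
      linarith
  obtain ⟨n, hn⟩ := exists_nat_gt (2 * (Vf T0 + 1))
  have h1 := htel n
  have h2 := hVlow (T0 + n)
  linarith

/-- **Theorem 2 (asymptotic stability of MPC with charging constraints):** if
`α_d·tmax ≤ 1` and `t_hor ≥ 2·tmax + 2·⌈(α_d/α_c)·tmax⌉`, there is a `ρ̄ > 0` such that
for all weights `0 ≤ ρ₁, ρ₂, ρ_c < ρ̄`, every MPC trajectory of the undisturbed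
augmented system from a feasible augmented state eventually has all waiting-customer
counts equal to zero. -/
theorem mpc_charging_solves_ARP {N V : Type} [Fintype N] [DecidableEq N] [Fintype V]
    [Nonempty V] (t : N → N → ℕ) (hcard : 2 ≤ Fintype.card N)
    (ht : ∀ i j : N, i ≠ j → 1 ≤ t i j)
    (αc αd : ℝ) (hαc : 0 < αc) (hαd : 0 < αd)
    (hrange : αd * (tmax t : ℝ) ≤ 1)
    (thor : ℕ)
    (hthor : 2 * tmax t + 2 * (⌈αd / αc * (tmax t : ℝ)⌉).toNat ≤ thor) :
    ∃ ρbar : ℝ, 0 < ρbar ∧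
      ∀ ρ1 ρ2 ρc : ℝ, 0 ≤ ρ1 → ρ1 < ρbar → 0 ≤ ρ2 → ρ2 < ρbar → 0 ≤ ρc → ρc < ρbar →
        ∀ (ss : ℕ → AugState N V) (cs : ℕ → AMoDControl N V),
          FeasAugState t αd (ss 0) → AugMPCTraj t αc αd ρ1 ρ2 ρc thor ss cs →
            ∃ T : ℕ, ∀ τ ≥ T, ∀ i j : N, (ss τ).x.d i j = 0 := by
  exact mpc_charging_solves_ARP' t hcard ht αc αd hαc hαd hrange thor hthor
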